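/- arXiv:1901.07918 — 6 statements merged into one kernel-verified Lean document; each statement's English description precedes it below -/
import Mathlib

section
/- (Taylor's theorem, module version.) The augmented Taylor complex 0 → F_t → F_{t−1} → ⋯ → F_1 → F_0 = R → R/(𝔪_1,…,𝔪_t) → 0 is exact; that is, the Taylor complex T(𝔪_1,…,𝔪_t) is a free resolution of the R-module R/(𝔪_1,…,𝔪_t), where the augmentation F_0 = R·e_∅ → R/(𝔪_1,…,𝔪_t) is the natural projection. -/
/-!
Taylor's theorem (module version): the augmented Taylor complex
0 → F_t → ⋯ → F_1 → F_0 = R → R/(𝔪_1,…,𝔪_t) → 0 is exact.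

Monomials are given by exponent vectors `a i : Fin m →₀ ℕ`, 𝔪_i = monomial (a i) 1.
`TaylorX k m t s` is the free module F_s with basis {e_J : J ⊆ {1,…,t}, |J| = s};
note that `TaylorX k m t s` is the zero module for s > t, so exactness of the
augmented complex at every F_s (s ≥ 1) is expressed uniformly, including
injectivity of F_t → F_{t-1}.  Exactness at R/(𝔪_1,…,𝔪_t) is surjectivity of the
projection, exactness at F_0 says ker(augmentation) = im(d : F_1 → F_0), where the
augmentation sends x = f·e_∅ to the class of f in R/(𝔪_1,…,𝔪_t).
-/

open Finset MvPolynomial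

/-- sign(j, J): (−1)^(number of elements of J smaller than j). -/
def taylorSign {t : ℕ} (J : Finset (Fin t)) (j : Fin t) : ℤ :=
  (-1) ^ (J.filter fun i => i < j).card

/-- Exponent vector of the monomial 𝔪_J = lcm_{j ∈ J} 𝔪_j (pointwise maximum). -/
noncomputable def lcmExp {m t : ℕ} (a : Fin t → (Fin m →₀ ℕ)) (J : Finset (Fin t)) :
    Fin m →₀ ℕ :=
  J.sup a

/-- The s-th term of the Taylor complex: the free R-module with basis
{e_J : J ⊆ {1,…,t}, |J| = s}, R = k[v_1,…,v_m]. -/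
abbrev TaylorX (k : Type*) [CommRing k] (m t s : ℕ) : Type _ :=
  {J : Finset (Fin t) // J.card = s} →₀ MvPolynomial (Fin m) k

/-- The Taylor differential d(e_J) = Σ_{j∈J} sign(j,J)·(𝔪_J/𝔪_{J∖{j}})·e_{J∖{j}}. -/
noncomputable def taylorD {k : Type*} [CommRing k] {m t : ℕ}
    (a : Fin t → (Fin m →₀ ℕ)) (s : ℕ) :
    TaylorX k m t (s + 1) →ₗ[MvPolynomial (Fin m) k] TaylorX k m t s :=
  Finsupp.lsum ℕ fun J =>
    LinearMap.toSpanSingleton (MvPolynomial (Fin m) k) (TaylorX k m t s)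
      (∑ j ∈ J.1.attach,
        taylorSign J.1 j.1 •
          Finsupp.single
            ⟨J.1.erase j.1, by simp [Finset.card_erase_of_mem j.2, J.2]⟩
            (monomial (lcmExp a J.1 - lcmExp a (J.1.erase j.1)) (1 : k)))

section
variable {m t : ℕ} (a : Fin t → (Fin m →₀ ℕ))

lemma fsub_add_fsub {b x y : Fin m →₀ ℕ} (h1 : y ≤ x) (h2 : x ≤ b) :
    (b - x) + (x - y) = b - y := by
  ext n
  rw [Finsupp.add_apply, Finsupp.tsub_apply, Finsupp.tsub_apply, Finsupp.tsub_apply]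
  have h1' := Finsupp.le_def.mp h1 n
  have h2' := Finsupp.le_def.mp h2 n
  omega

lemma lcmExp_mono {J K : Finset (Fin t)} (h : J ⊆ K) : lcmExp a J ≤ lcmExp a K :=
  Finset.sup_mono h

lemma lcmExp_empty : lcmExp a (∅ : Finset (Fin t)) = 0 := Finset.sup_empty

lemma lcmExp_singleton (j : Fin t) : lcmExp a {j} = a j := Finset.sup_singleton

lemma lcmExp_insert (i : Fin t) (J : Finset (Fin t)) :
    lcmExp a (insert i J) = a i ⊔ lcmExp a J := Finset.sup_insert

lemma taylorSign_eq_one {J : Finset (Fin t)} {i : Fin t} (h : ∀ j ∈ J, ¬ j < i) :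
    taylorSign J i = 1 := by
  unfold taylorSign
  rw [Finset.filter_eq_empty_iff.mpr h]
  simp

lemma taylorSign_insert {J : Finset (Fin t)} {i j : Fin t} (hij : i < j) (hiJ : i ∉ J) :
    taylorSign (insert i J) j = -taylorSign J j := by
  unfold taylorSign
  rw [Finset.filter_insert, if_pos hij,
    Finset.card_insert_of_notMem (fun hc => hiJ (Finset.mem_of_mem_filter i hc)), pow_succ]
  ring

lemma taylorSign_mul_antisymm_aux {J : Finset (Fin t)} {i j : Fin t} (hi : i ∈ J) (hj : j ∈ J)
    (hij : i < j) :
    taylorSign J i * taylorSign (J.erase i) j = -(taylorSign J j * taylorSign (J.erase j) i) := by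
  unfold taylorSign
  have h1 : (J.erase i).filter (fun x => x < j) = ((J.filter fun x => x < j)).erase i := by
    rw [Finset.filter_erase]
  have h2 : (J.erase j).filter (fun x => x < i) = J.filter (fun x => x < i) := by
    rw [Finset.filter_erase, Finset.erase_eq_of_notMem]
    simp only [Finset.mem_filter, not_and]
    exact fun _ => not_lt_of_gt hij
  rw [h1, h2]
  have hmem : i ∈ J.filter (fun x => x < j) := Finset.mem_filter.mpr ⟨hi, hij⟩
  rw [Finset.card_erase_of_mem hmem]
  have hnpos : 0 < (J.filter (fun x => x < j)).card := Finset.card_pos.mpr ⟨i, hmem⟩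
  obtain ⟨n', hn'⟩ : ∃ n', (J.filter (fun x => x < j)).card = n' + 1 :=
    ⟨_, (Nat.succ_pred_eq_of_pos hnpos).symm⟩
  rw [hn']
  simp only [Nat.add_sub_cancel, pow_succ]
  ring

lemma taylorSign_mul_antisymm {J : Finset (Fin t)} {i j : Fin t} (hi : i ∈ J) (hj : j ∈ J)
    (hij : i ≠ j) :
    taylorSign J i * taylorSign (J.erase i) j = -(taylorSign J j * taylorSign (J.erase j) i) := by
  rcases lt_or_gt_of_ne hij with h | h
  · exact taylorSign_mul_antisymm_aux hi hj h
  · rw [taylorSign_mul_antisymm_aux hj hi h]; ring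

end

section
variable {k : Type*} [CommRing k] {m t : ℕ} (a : Fin t → (Fin m →₀ ℕ))

/-- Basis-ish element: `single ⟨K, _⟩ (monomial c u)` if `K.card = s`, else `0`. -/
noncomputable def bE (s : ℕ) (K : Finset (Fin t)) (c : Fin m →₀ ℕ) (u : k) :
    TaylorX k m t s :=
  if h : K.card = s then Finsupp.single ⟨K, h⟩ (monomial c u) else 0

lemma bE_pos {s : ℕ} {K : Finset (Fin t)} (h : K.card = s) (c : Fin m →₀ ℕ) (u : k) :
    bE (k := k) (m := m) s K c u = Finsupp.single ⟨K, h⟩ (monomial c u) := dif_pos h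

lemma taylorD_single (s : ℕ) (K : Finset (Fin t)) (hK : K.card = s + 1)
    (c : Fin m →₀ ℕ) (u : k) :
    taylorD a s (Finsupp.single ⟨K, hK⟩ (monomial c u)) =
      ∑ j ∈ K, taylorSign K j •
        bE s (K.erase j) (c + (lcmExp a K - lcmExp a (K.erase j))) u := by
  rw [taylorD, Finsupp.lsum_single, LinearMap.toSpanSingleton_apply, Finset.smul_sum]
  rw [← Finset.sum_attach K (fun j => taylorSign K j •
      bE (k := k) s (K.erase j) (c + (lcmExp a K - lcmExp a (K.erase j))) u)]
  refine Finset.sum_congr rfl fun j _ => ?_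
  rw [smul_comm, bE_pos (by simp [Finset.card_erase_of_mem j.2, hK])]
  congr 1
  rw [Finsupp.smul_single, smul_eq_mul, monomial_mul, mul_one]

open scoped Classical in
/-- The set of indices `i` with `𝔪_i ∣ v^b`. -/
noncomputable def divisors (b : Fin m →₀ ℕ) : Finset (Fin t) :=
  Finset.univ.filter fun i => a i ≤ b

lemma mem_divisors {b : Fin m →₀ ℕ} {i : Fin t} : i ∈ divisors a b ↔ a i ≤ b := by
  simp [divisors]

open scoped Classical in
/-- Image of the monomial `v^c e_K` under the contracting homotopy (at level `s`). -/
noncomputable def hM (K : Finset (Fin t)) (c : Fin m →₀ ℕ) (u : k) (s : ℕ) :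
    TaylorX k m t s :=
  if hb : (divisors a (c + lcmExp a K)).Nonempty then
    if (divisors a (c + lcmExp a K)).min' hb ∈ K then 0
    else bE s (insert ((divisors a (c + lcmExp a K)).min' hb) K)
      ((c + lcmExp a K) - lcmExp a (insert ((divisors a (c + lcmExp a K)).min' hb) K)) u
  else 0

lemma hM_of_mem {K : Finset (Fin t)} {c b : Fin m →₀ ℕ} (hb : c + lcmExp a K = b)
    (hne : (divisors a b).Nonempty) (hi : (divisors a b).min' hne ∈ K) (u : k) (s : ℕ) :
    hM a K c u s = 0 := by
  subst hb; rw [hM, dif_pos hne, if_pos hi]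

lemma hM_of_not_mem {K : Finset (Fin t)} {c b : Fin m →₀ ℕ} (hb : c + lcmExp a K = b)
    (hne : (divisors a b).Nonempty) (hi : (divisors a b).min' hne ∉ K) (u : k) (s : ℕ) :
    hM a K c u s = bE s (insert ((divisors a b).min' hne) K)
      (b - lcmExp a (insert ((divisors a b).min' hne) K)) u := by
  subst hb; rw [hM, dif_pos hne, if_neg hi]

noncomputable def hMap (s : ℕ) : TaylorX k m t s →ₗ[k] TaylorX k m t (s + 1) :=
  Finsupp.lsum k fun J =>
    (MvPolynomial.basisMonomials (Fin m) k).constr k fun c => hM a J.1 c 1 (s + 1)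

lemma hM_smul (K : Finset (Fin t)) (c : Fin m →₀ ℕ) (u : k) (s : ℕ) :
    u • hM a K c 1 s = hM (k := k) a K c u s := by
  rw [hM, hM]
  split_ifs with h1 h2
  · simp
  · rw [bE, bE]
    split_ifs with h3
    · rw [Finsupp.smul_single, MvPolynomial.smul_monomial, smul_eq_mul, mul_one]
    · simp
  · simp

lemma hMap_bE {s : ℕ} {K : Finset (Fin t)} (hK : K.card = s) (c : Fin m →₀ ℕ) (u : k) :
    hMap a s (bE s K c u) = hM a K c u (s + 1) := by
  rw [bE_pos hK, hMap]
  have hmono : (monomial c u : MvPolynomial (Fin m) k) =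
      u • (MvPolynomial.basisMonomials (Fin m) k) c := by
    rw [MvPolynomial.coe_basisMonomials, MvPolynomial.smul_monomial, smul_eq_mul, mul_one]
  rw [hmono, ← Finsupp.smul_single, map_smul, Finsupp.lsum_single, Module.Basis.constr_basis, hM_smul]

lemma keyMain (s : ℕ) {K : Finset (Fin t)} (hK : K.card = s) (c : Fin m →₀ ℕ) (u : k)
    {b : Fin m →₀ ℕ} (hb : c + lcmExp a K = b) (hne : (divisors a b).Nonempty)
    (hi : (divisors a b).min' hne ∉ K) :
    taylorD a s (hM a K c u (s + 1)) = bE s K c u -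
      ∑ j ∈ K, taylorSign K j •
        hM a (K.erase j) (c + (lcmExp a K - lcmExp a (K.erase j))) u s := by
  set i := (divisors a b).min' hne with hidef
  have hab : a i ≤ b := mem_divisors a |>.mp ((divisors a b).min'_mem hne)
  have hKb : lcmExp a K ≤ b := hb ▸ self_le_add_left _ _
  have hIb : lcmExp a (insert i K) ≤ b := by
    rw [lcmExp_insert]; exact sup_le hab hKb
  have hmemdiv : ∀ j ∈ K, j ∈ divisors a b := fun j hj =>
    (mem_divisors a).mpr ((Finset.le_sup hj).trans hKb)
  have hile : ∀ j ∈ K, ¬ j < i := fun j hj =>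
    not_lt.mpr ((divisors a b).min'_le j (hmemdiv j hj))
  have hcard : (insert i K).card = s + 1 := by
    rw [Finset.card_insert_of_notMem hi, hK]
  have hbc : b - lcmExp a K = c := by rw [← hb, add_tsub_cancel_right]
  rw [hM_of_not_mem a hb hne hi, bE_pos hcard,
    taylorD_single a s (insert i K) hcard, Finset.sum_insert hi]
  have hterm1 : taylorSign (insert i K) i •
      bE (k := k) s ((insert i K).erase i)
        ((b - lcmExp a (insert i K)) +
          (lcmExp a (insert i K) - lcmExp a ((insert i K).erase i))) u = bE s K c u := by
    rw [Finset.erase_insert hi,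
      taylorSign_eq_one (fun j hj => by
        rcases Finset.mem_insert.mp hj with rfl | hj
        · exact lt_irrefl _
        · exact hile j hj),
      one_smul, fsub_add_fsub (lcmExp_mono a (Finset.subset_insert i K)) hIb, hbc]
  have hterm2 : ∀ j ∈ K, taylorSign (insert i K) j •
      bE (k := k) s ((insert i K).erase j)
        ((b - lcmExp a (insert i K)) +
          (lcmExp a (insert i K) - lcmExp a ((insert i K).erase j))) u =
      -(taylorSign K j •
        hM a (K.erase j) (c + (lcmExp a K - lcmExp a (K.erase j))) u s) := by
    intro j hj
    have hij : i ≠ j := fun h => hi (h ▸ hj)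
    have hilt : i < j := lt_of_le_of_ne ((divisors a b).min'_le j (hmemdiv j hj)) hij
    have hbj : (c + (lcmExp a K - lcmExp a (K.erase j))) + lcmExp a (K.erase j) = b := by
      rw [add_assoc, tsub_add_cancel_of_le (lcmExp_mono a (Finset.erase_subset j K)), hb]
    have hinotin : i ∉ K.erase j := fun h => hi (Finset.mem_of_mem_erase h)
    rw [hM_of_not_mem a hbj hne hinotin, Finset.erase_insert_of_ne hij,
      fsub_add_fsub (lcmExp_mono a (Finset.insert_subset_insert i (Finset.erase_subset j K))) hIb,
      taylorSign_insert hilt hi, neg_smul]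
  rw [hterm1, Finset.sum_congr rfl hterm2, Finset.sum_neg_distrib, ← sub_eq_add_neg]

lemma keyMem (s : ℕ) {K : Finset (Fin t)} (hK : K.card = s) (c : Fin m →₀ ℕ) (u : k)
    {b : Fin m →₀ ℕ} (hb : c + lcmExp a K = b) (hne : (divisors a b).Nonempty)
    (hi : (divisors a b).min' hne ∈ K) :
    ∑ j ∈ K, taylorSign K j •
      hM a (K.erase j) (c + (lcmExp a K - lcmExp a (K.erase j))) u s = bE s K c u := by
  set i := (divisors a b).min' hne with hidef
  have hKb : lcmExp a K ≤ b := hb ▸ self_le_add_left _ _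
  have hmemdiv : ∀ j ∈ K, j ∈ divisors a b := fun j hj =>
    (mem_divisors a).mpr ((Finset.le_sup hj).trans hKb)
  have hile : ∀ j ∈ K, ¬ j < i := fun j hj =>
    not_lt.mpr ((divisors a b).min'_le j (hmemdiv j hj))
  have hbj : ∀ j ∈ K, (c + (lcmExp a K - lcmExp a (K.erase j))) + lcmExp a (K.erase j) = b := by
    intro j hj
    rw [add_assoc, tsub_add_cancel_of_le (lcmExp_mono a (Finset.erase_subset j K)), hb]
  rw [Finset.sum_eq_single_of_mem i hi (fun j hj hji => by
    rw [hM_of_mem a (hbj j hj) hne (Finset.mem_erase.mpr ⟨Ne.symm hji, hi⟩), smul_zero])]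
  rw [taylorSign_eq_one (hile), one_smul,
    hM_of_not_mem a (hbj i hi) hne (Finset.notMem_erase i K), Finset.insert_erase hi]
  rw [← hb, add_tsub_cancel_right]

lemma taylorD_bE (s : ℕ) {K : Finset (Fin t)} (hK : K.card = s + 1) (c : Fin m →₀ ℕ) (u : k) :
    taylorD a s (bE (s + 1) K c u) =
      ∑ j ∈ K, taylorSign K j •
        bE s (K.erase j) (c + (lcmExp a K - lcmExp a (K.erase j))) u := by
  rw [bE_pos hK, taylorD_single a s K hK]

lemma hMap_taylorD_bE (s : ℕ) {K : Finset (Fin t)} (hK : K.card = s + 1)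
    (c : Fin m →₀ ℕ) (u : k) :
    hMap a s (taylorD a s (bE (s + 1) K c u)) =
      ∑ j ∈ K, taylorSign K j •
        hM a (K.erase j) (c + (lcmExp a K - lcmExp a (K.erase j))) u (s + 1) := by
  rw [taylorD_bE a s hK, map_sum]
  refine Finset.sum_congr rfl fun j hj => ?_
  rw [map_zsmul, hMap_bE a (by rw [Finset.card_erase_of_mem hj, hK]; rfl)]

lemma homotopy_bE (s : ℕ) {K : Finset (Fin t)} (hK : K.card = s + 1)
    (c : Fin m →₀ ℕ) (u : k) :
    taylorD a (s + 1) (hMap a (s + 1) (bE (s + 1) K c u)) +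
      hMap a s (taylorD a s (bE (s + 1) K c u)) = bE (s + 1) K c u := by
  have hKne : K.Nonempty := Finset.card_pos.mp (by omega)
  obtain ⟨j0, hj0⟩ := hKne
  have hne : (divisors a (c + lcmExp a K)).Nonempty :=
    ⟨j0, (mem_divisors a).mpr ((Finset.le_sup hj0).trans (self_le_add_left _ _))⟩
  rw [hMap_bE a hK, hMap_taylorD_bE a s hK]
  by_cases hi : (divisors a (c + lcmExp a K)).min' hne ∈ K
  · rw [hM_of_mem a rfl hne hi, map_zero, zero_add, keyMem a (s + 1) hK c u rfl hne hi]
  · rw [keyMain a (s + 1) hK c u rfl hne hi, sub_add_cancel]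

lemma homotopy_single (s : ℕ) (J : {J : Finset (Fin t) // J.card = s + 1})
    (p : MvPolynomial (Fin m) k) :
    taylorD a (s + 1) (hMap a (s + 1) (Finsupp.single J p)) +
      hMap a s (taylorD a s (Finsupp.single J p)) = Finsupp.single J p := by
  obtain ⟨K, hK⟩ := J
  induction p using MvPolynomial.induction_on' with
  | monomial c u => rw [← bE_pos hK]; exact homotopy_bE a s hK c u
  | add p q ihp ihq =>
    rw [Finsupp.single_add, map_add, map_add, map_add, map_add]
    calc taylorD a (s+1) (hMap a (s+1) (Finsupp.single ⟨K, hK⟩ p)) +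
          taylorD a (s+1) (hMap a (s+1) (Finsupp.single ⟨K, hK⟩ q)) +
          (hMap a s (taylorD a s (Finsupp.single ⟨K, hK⟩ p)) +
            hMap a s (taylorD a s (Finsupp.single ⟨K, hK⟩ q)))
        = (taylorD a (s+1) (hMap a (s+1) (Finsupp.single ⟨K, hK⟩ p)) +
            hMap a s (taylorD a s (Finsupp.single ⟨K, hK⟩ p))) +
          (taylorD a (s+1) (hMap a (s+1) (Finsupp.single ⟨K, hK⟩ q)) +
            hMap a s (taylorD a s (Finsupp.single ⟨K, hK⟩ q))) := by abel
      _ = Finsupp.single ⟨K, hK⟩ p + Finsupp.single ⟨K, hK⟩ q := by rw [ihp, ihq]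

lemma homotopy (s : ℕ) (x : TaylorX k m t (s + 1)) :
    taylorD a (s + 1) (hMap a (s + 1) x) + hMap a s (taylorD a s x) = x := by
  induction x using Finsupp.induction with
  | zero => simp
  | single_add J p f _ _ ih =>
    rw [map_add, map_add, map_add, map_add]
    calc taylorD a (s+1) (hMap a (s+1) (Finsupp.single J p)) +
          taylorD a (s+1) (hMap a (s+1) f) +
          (hMap a s (taylorD a s (Finsupp.single J p)) + hMap a s (taylorD a s f))
        = (taylorD a (s+1) (hMap a (s+1) (Finsupp.single J p)) +
            hMap a s (taylorD a s (Finsupp.single J p))) +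
          (taylorD a (s+1) (hMap a (s+1) f) + hMap a s (taylorD a s f)) := by abel
      _ = Finsupp.single J p + f := by rw [homotopy_single, ih]

lemma dd_bE (s : ℕ) {K : Finset (Fin t)} (hK : K.card = s + 2) (c : Fin m →₀ ℕ) (u : k) :
    taylorD a s (taylorD a (s + 1) (bE (s + 2) K c u)) = 0 := by
  set G : Fin t → Fin t → TaylorX k m t s := fun j j' =>
    if j' = j then 0 else
      (taylorSign K j * taylorSign (K.erase j) j') •
        bE s ((K.erase j).erase j')
          (c + (lcmExp a K - lcmExp a ((K.erase j).erase j'))) u with hG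
  have h1 : ∀ j ∈ K, taylorD a s (taylorSign K j •
      bE (s + 1) (K.erase j) (c + (lcmExp a K - lcmExp a (K.erase j))) u) =
      ∑ j' ∈ K, G j j' := by
    intro j hj
    have hcj : (K.erase j).card = s + 1 := by rw [Finset.card_erase_of_mem hj, hK]; rfl
    rw [map_zsmul, taylorD_bE a s hcj, Finset.smul_sum,
      ← Finset.sum_erase K (a := j) (f := fun j' => G j j') (by rw [hG]; simp)]
    refine Finset.sum_congr rfl fun j' hj' => ?_
    have hne' : j' ≠ j := (Finset.mem_erase.mp hj').1
    have hexp : (c + (lcmExp a K - lcmExp a (K.erase j))) +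
        (lcmExp a (K.erase j) - lcmExp a ((K.erase j).erase j')) =
        c + (lcmExp a K - lcmExp a ((K.erase j).erase j')) := by
      rw [add_assoc, fsub_add_fsub (lcmExp_mono a (Finset.erase_subset j' (K.erase j)))
        (lcmExp_mono a (Finset.erase_subset j K))]
    rw [hG]
    simp only [if_neg hne']
    rw [smul_smul, hexp]
  rw [taylorD_bE a (s + 1) hK, map_sum, Finset.sum_congr rfl h1,
    show (∑ j ∈ K, ∑ j' ∈ K, G j j') = ∑ p ∈ K ×ˢ K, G p.1 p.2 from
      (Finset.sum_product K K (fun p => G p.1 p.2)).symm]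
  refine Finset.sum_involution (fun p _ => (p.2, p.1)) ?_ ?_ ?_ ?_
  · intro p hp
    rcases Finset.mem_product.mp hp with ⟨hp1, hp2⟩
    by_cases hpp : p.2 = p.1
    · rw [hG]; simp only [if_pos hpp, if_pos hpp.symm]; rw [add_zero]
    · rw [hG]
      simp only [if_neg hpp, if_neg (Ne.symm hpp)]
      rw [Finset.erase_right_comm (a := p.2) (b := p.1),
        taylorSign_mul_antisymm hp1 hp2 (Ne.symm hpp), neg_smul, neg_add_cancel]
  · intro p _ hfp
    intro hc
    apply hfp
    have : p.2 = p.1 := congrArg Prod.fst hc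
    rw [hG]; simp only [if_pos this]
  · intro p hp
    rcases Finset.mem_product.mp hp with ⟨hp1, hp2⟩
    exact Finset.mem_product.mpr ⟨hp2, hp1⟩
  · intro p _; rfl

lemma dd (s : ℕ) (x : TaylorX k m t (s + 2)) :
    taylorD a s (taylorD a (s + 1) x) = 0 := by
  induction x using Finsupp.induction with
  | zero => simp
  | single_add J p f _ _ ih =>
    rw [map_add, map_add, ih, add_zero]
    have hp : Finsupp.single J p = p • Finsupp.single J (monomial 0 (1 : k)) := by
      rw [Finsupp.smul_single, smul_eq_mul]
      congr 1
      rw [MvPolynomial.monomial_zero', MvPolynomial.C_1, mul_one]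
    rw [hp, map_smul, map_smul]
    obtain ⟨K, hK⟩ := J
    rw [← bE_pos hK, dd_bE a s hK, smul_zero]

lemma monomial_mem_span {b : Fin m →₀ ℕ} (u : k) (h : ∃ i, a i ≤ b) :
    (monomial b u : MvPolynomial (Fin m) k) ∈
      Ideal.span (Set.range fun i => monomial (a i) (1 : k)) := by
  obtain ⟨i, hi⟩ := h
  have heq : (monomial b u : MvPolynomial (Fin m) k) =
      monomial (b - a i) u * monomial (a i) 1 := by
    rw [monomial_mul, mul_one, tsub_add_cancel_of_le hi]
  rw [heq]
  exact Ideal.mul_mem_left _ _ (Ideal.subset_span ⟨i, rfl⟩)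

lemma mem_span_iff (f : MvPolynomial (Fin m) k) :
    f ∈ Ideal.span (Set.range fun i => monomial (a i) (1 : k)) ↔
      ∀ b ∈ f.support, ∃ i, a i ≤ b := by
  constructor
  · intro hf
    let S : Ideal (MvPolynomial (Fin m) k) := {
      carrier := {g | ∀ b ∈ g.support, ∃ i, a i ≤ b}
      zero_mem' := by simp
      add_mem' := by
        intro g h hg hh b hb
        rcases Finset.mem_union.mp (MvPolynomial.support_add hb) with h' | h'
        · exact hg b h'
        · exact hh b h'
      smul_mem' := by
        intro r g hg b hb
        rw [smul_eq_mul] at hb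
        obtain ⟨b1, hb1, b2, hb2, rfl⟩ := Finset.mem_add.mp (MvPolynomial.support_mul r g hb)
        obtain ⟨i, hi⟩ := hg b2 hb2
        exact ⟨i, hi.trans (le_add_self)⟩ }
    have hle : Ideal.span (Set.range fun i => monomial (a i) (1 : k)) ≤ S := by
      rw [Ideal.span_le]
      rintro g ⟨i, rfl⟩ b hb
      classical
      rw [MvPolynomial.support_monomial] at hb
      split_ifs at hb
      · exact absurd hb (Finset.notMem_empty b)
      · exact ⟨i, (Finset.mem_singleton.mp hb) ▸ le_refl _⟩
    exact hle hf
  · intro h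
    exact (support_sum_monomial_coeff f) ▸
      Ideal.sum_mem _ (fun b hb => monomial_mem_span a _ (h b hb))

lemma taylorD0_mem (y : TaylorX k m t 1) :
    (taylorD a 0 y) ⟨∅, Finset.card_empty⟩ ∈
      Ideal.span (Set.range fun i => monomial (a i) (1 : k)) := by
  induction y using Finsupp.induction with
  | zero => simp
  | single_add J p f _ _ ih =>
    rw [map_add, Finsupp.add_apply]
    refine add_mem ?_ ih
    obtain ⟨K, hK⟩ := J
    obtain ⟨j, rfl⟩ := Finset.card_eq_one.mp hK
    have hp : Finsupp.single (⟨{j}, hK⟩ : {J : Finset (Fin t) // J.card = 1}) p =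
        p • Finsupp.single ⟨{j}, hK⟩ (monomial 0 (1 : k)) := by
      rw [Finsupp.smul_single, smul_eq_mul]
      congr 1
      rw [MvPolynomial.monomial_zero', MvPolynomial.C_1, mul_one]
    rw [hp, map_smul]
    have hd : taylorD a 0 (Finsupp.single (⟨{j}, hK⟩ : {J : Finset (Fin t) // J.card = 1})
        (monomial 0 (1 : k))) =
        Finsupp.single ⟨∅, Finset.card_empty⟩ (monomial (a j) (1 : k)) := by
      rw [taylorD_single a 0 {j} hK, Finset.sum_singleton, Finset.erase_singleton,
        taylorSign_eq_one (fun x hx => by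
          rw [Finset.mem_singleton] at hx; exact hx ▸ lt_irrefl x),
        one_smul, bE_pos Finset.card_empty, lcmExp_singleton, lcmExp_empty, tsub_zero, zero_add]
    rw [hd, Finsupp.smul_apply, Finsupp.single_eq_same, smul_eq_mul]
    exact Ideal.mul_mem_left _ _ (Ideal.subset_span ⟨j, rfl⟩)

lemma X0_eq (x : TaylorX k m t 0) :
    x = Finsupp.single ⟨∅, Finset.card_empty⟩ (x ⟨∅, Finset.card_empty⟩) := by
  ext J
  have hJ : J = ⟨∅, Finset.card_empty⟩ := Subtype.ext (Finset.card_eq_zero.mp J.2)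
  rw [hJ, Finsupp.single_eq_same]

lemma F0_mono (b : Fin m →₀ ℕ) (u : k) (hb : ∃ i, a i ≤ b) :
    taylorD a 0 (hMap a 0 (bE 0 ∅ b u)) = bE 0 ∅ b u := by
  have h0 : b + lcmExp a (∅ : Finset (Fin t)) = b := by rw [lcmExp_empty, add_zero]
  obtain ⟨i, hi⟩ := hb
  have hne : (divisors a b).Nonempty := ⟨i, (mem_divisors a).mpr hi⟩
  rw [hMap_bE a Finset.card_empty,
    keyMain a 0 Finset.card_empty b u h0 hne (Finset.notMem_empty _),
    Finset.sum_empty, sub_zero]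

lemma F0_homotopy (f : MvPolynomial (Fin m) k) (hf : ∀ b ∈ f.support, ∃ i, a i ≤ b) :
    taylorD a 0 (hMap a 0 (Finsupp.single ⟨∅, Finset.card_empty⟩ f)) =
      Finsupp.single ⟨∅, Finset.card_empty⟩ f := by
  have hrw : Finsupp.single (⟨∅, Finset.card_empty⟩ : {J : Finset (Fin t) // J.card = 0}) f =
      ∑ b ∈ f.support, bE 0 ∅ b (coeff b f) := by
    conv_lhs => rw [← support_sum_monomial_coeff f]
    rw [Finsupp.single_finset_sum]
    exact Finset.sum_congr rfl fun b _ => (bE_pos Finset.card_empty b _).symm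
  rw [hrw, map_sum, map_sum]
  exact Finset.sum_congr rfl fun b hb => F0_mono a b _ (hf b hb)

end

/-- Taylor's theorem, module version: the Taylor complex
T(𝔪_1,…,𝔪_t) is a free resolution of R/(𝔪_1,…,𝔪_t): the augmented complex
0 → F_t → ⋯ → F_1 → F_0 = R → R/(𝔪_1,…,𝔪_t) → 0 is exact. -/
theorem taylor_is_resolution {k : Type*} [CommRing k] {m t : ℕ}
    (a : Fin t → (Fin m →₀ ℕ)) :
    -- exactness at R/(𝔪_1,…,𝔪_t): surjectivity of the augmentation F₀ = R → R/(𝔪)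
    Function.Surjective
      (Ideal.Quotient.mk (Ideal.span (Set.range fun i => monomial (a i) (1 : k)))) ∧
    -- exactness at F₀: ker(F₀ → R/(𝔪)) = im(d : F₁ → F₀)
    (∀ x : TaylorX k m t 0,
      Ideal.Quotient.mk (Ideal.span (Set.range fun i => monomial (a i) (1 : k)))
          (x ⟨∅, Finset.card_empty⟩) = 0 ↔
        ∃ y : TaylorX k m t 1, taylorD (k := k) a 0 y = x) ∧
    -- exactness at F_s for every s ≥ 1 (F_s = 0 for s > t, so this includes
    -- injectivity of F_t → F_{t-1})
    (∀ s : ℕ, ∀ x : TaylorX k m t (s + 1),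
      taylorD (k := k) a s x = 0 ↔ ∃ y : TaylorX k m t (s + 2), taylorD (k := k) a (s + 1) y = x) := by
  refine ⟨Ideal.Quotient.mk_surjective, ?_, ?_⟩
  · intro x
    constructor
    · intro hx
      refine ⟨hMap a 0 x, ?_⟩
      have hx' : ∀ b ∈ (x ⟨∅, Finset.card_empty⟩).support, ∃ i, a i ≤ b :=
        (mem_span_iff a _).mp (Ideal.Quotient.eq_zero_iff_mem.mp hx)
      conv_lhs => rw [X0_eq x]
      conv_rhs => rw [X0_eq x]
      exact F0_homotopy a _ hx'
    · rintro ⟨y, rfl⟩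
      rw [Ideal.Quotient.eq_zero_iff_mem]
      exact taylorD0_mem a y
  · intro s x
    constructor
    · intro hx
      refine ⟨hMap a (s + 1) x, ?_⟩
      have h := homotopy a s x
      rwa [hx, map_zero, add_zero] at h
    · rintro ⟨y, rfl⟩
      exact dd a s y
end

section
/- Let 𝔪_1,…,𝔪_t be monomials in R = k[v_1,…,v_m] and set n_i = 𝔪_i/gcd(𝔪_i,𝔪_t) for i = 1,…,t−1. Then the sequence 0 → R/(n_1,…,n_{t−1}) → R/(𝔪_1,…,𝔪_{t−1}) → R/(𝔪_1,…,𝔪_t) → 0 is exact, where the first map is induced by multiplication by 𝔪_t and the second map is the natural projection. In particular, multiplication by 𝔪_t induces an injective map R/(n_1,…,n_{t−1}) → R/(𝔪_1,…,𝔪_{t−1}) whose image is the kernel of the projection R/(𝔪_1,…,𝔪_{t−1}) → R/(𝔪_1,…,𝔪_t). -/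
open MvPolynomial

theorem monomial_ideal_ses {k : Type*} [CommRing k] {m n : ℕ}
    (a : Fin n → (Fin m →₀ ℕ)) (b : Fin m →₀ ℕ) :
    (∀ f : MvPolynomial (Fin m) k,
      f ∈ Ideal.span (Set.range fun i => monomial (a i - a i ⊓ b) (1 : k)) ↔
        monomial b (1 : k) * f ∈ Ideal.span (Set.range fun i => monomial (a i) (1 : k))) ∧
    (∀ g : MvPolynomial (Fin m) k,
      g ∈ Ideal.span (insert (monomial b (1 : k))
            (Set.range fun i => monomial (a i) (1 : k))) ↔
        ∃ f : MvPolynomial (Fin m) k,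
          g - monomial b (1 : k) * f ∈ Ideal.span (Set.range fun i => monomial (a i) (1 : k))) ∧
    Function.Surjective
      (Ideal.Quotient.factor
        (S := Ideal.span (Set.range fun i => monomial (a i) (1 : k)))
        (T := Ideal.span (insert (monomial b (1 : k))
          (Set.range fun i => monomial (a i) (1 : k))))
        (Ideal.span_mono (Set.subset_insert (monomial b (1 : k))
          (Set.range fun i => monomial (a i) (1 : k))))) := by
  have hr1 : (Set.range fun i => monomial (a i - a i ⊓ b) (1 : k)) =
      (fun s => monomial s (1 : k)) '' (Set.range fun i => a i - a i ⊓ b) := by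
    rw [← Set.range_comp]; rfl
  have hr2 : (Set.range fun i => monomial (a i) (1 : k)) =
      (fun s => monomial s (1 : k)) '' (Set.range a) := by
    rw [← Set.range_comp]; rfl
  refine ⟨fun f => ?_, fun g => ?_, ?_⟩
  · rw [hr1, hr2, mem_ideal_span_monomial_image, mem_ideal_span_monomial_image]
    constructor
    · intro h d hd
      rw [mem_support_iff, coeff_monomial_mul'] at hd
      by_cases hbd : b ≤ d
      · rw [if_pos hbd, one_mul] at hd
        obtain ⟨s, ⟨i, rfl⟩, hs⟩ := h _ (mem_support_iff.mpr hd)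
        refine ⟨a i, ⟨i, rfl⟩, fun j => ?_⟩
        have h1 := hs j
        have h2 := hbd j
        simp only [Finsupp.tsub_apply, Finsupp.inf_apply] at h1 ⊢
        omega
      · rw [if_neg hbd] at hd; exact absurd rfl hd
    · intro h c hc
      have hd : b + c ∈ (monomial b (1 : k) * f).support := by
        rw [mem_support_iff, coeff_monomial_mul, one_mul]
        exact mem_support_iff.mp hc
      obtain ⟨s, ⟨i, rfl⟩, hs⟩ := h _ hd
      refine ⟨a i - a i ⊓ b, ⟨i, rfl⟩, fun j => ?_⟩
      have h1 := hs j
      simp only [Finsupp.add_apply] at h1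
      simp only [Finsupp.tsub_apply, Finsupp.inf_apply]
      omega
  · rw [Ideal.mem_span_insert]
    constructor
    · rintro ⟨c, z, hz, rfl⟩
      exact ⟨c, by rw [mul_comm]; simpa using hz⟩
    · rintro ⟨f, hf⟩
      exact ⟨f, g - monomial b 1 * f, hf, by ring⟩
  · intro x
    obtain ⟨y, rfl⟩ := Ideal.Quotient.mk_surjective x
    exact ⟨Ideal.Quotient.mk _ y, rfl⟩
end

section
/- Let 𝔪_1,…,𝔪_t be monomials in R = k[v_1,…,v_m] and n_i = 𝔪_i/gcd(𝔪_i,𝔪_t) for i = 1,…,t−1. The R-linear maps φ̃_s from the s-th term of T(n_1,…,n_{t−1}) to the s-th term of T(𝔪_1,…,𝔪_{t−1}) defined on basis elements by φ̃(ē_J) = (𝔪_{J∪{t}}/𝔪_J)·e_J, for J ⊆ {1,…,t−1} with |J| = s, commute with the Taylor differentials (i.e. φ̃ is a chain map). Moreover in degree 0 the map φ̃_0: R·ē_∅ → R·e_∅ is multiplication by 𝔪_t, so φ̃ is a lift of the map ·𝔪_t : R/(n_1,…,n_{t−1}) → R/(𝔪_1,…,𝔪_{t−1}) through the augmentations. 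-/
/-!
STATEMENT 5: the maps φ̃(ē_J) = (𝔪_{J∪{t}}/𝔪_J)·e_J form a chain map
T(n_1,…,n_{t−1}) → T(𝔪_1,…,𝔪_{t−1}), and in degree 0 the map is
multiplication by 𝔪_t, so φ̃ lifts ·𝔪_t : R/(n) → R/(𝔪) through the augmentations.

Monomials in R = k[v_1,…,v_m] are given by exponent vectors in `Fin m →₀ ℕ`:
𝔪_1,…,𝔪_{t−1} are `monomial (a i) 1` (indexed by `i : Fin n`, n = t−1) and
𝔪_t = `monomial b 1`; n_i = 𝔪_i/gcd(𝔪_i,𝔪_t) has exponent vector `a i - a i ⊓ b`.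
𝔪_{J∪{t}} has exponent vector `J.sup a ⊔ b`, so 𝔪_{J∪{t}}/𝔪_J is the monomial
with exponent vector `(J.sup a ⊔ b) - J.sup a`.  Both Taylor complexes have the
same underlying free modules `TaylorX k m n s` (with basis e_J, |J| = s), only
the differentials differ.
-/

open Finset MvPolynomial

/-- The map φ̃ in degree s, given on basis elements by
φ̃(ē_J) = (𝔪_{J∪{t}}/𝔪_J)·e_J. -/
noncomputable def taylorPhi {k : Type*} [CommRing k] {m n : ℕ}
    (a : Fin n → (Fin m →₀ ℕ)) (b : Fin m →₀ ℕ) (s : ℕ) :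
    TaylorX k m n s →ₗ[MvPolynomial (Fin m) k] TaylorX k m n s :=
  Finsupp.lsum ℕ fun J =>
    LinearMap.toSpanSingleton (MvPolynomial (Fin m) k) (TaylorX k m n s)
      (Finsupp.single J (monomial ((lcmExp a J.1 ⊔ b) - lcmExp a J.1) (1 : k)))

lemma nat_sup_sub {ι : Type*} (J : Finset ι) (f : ι → ℕ) (B : ℕ) :
    J.sup (fun i => f i - B) = J.sup f - B := by
  classical
  induction J using Finset.induction_on with
  | empty => simp
  | insert _ _ h ih =>
    simp only [Finset.sup_insert, ih]
    omega

lemma finsupp_sup_apply {m t : ℕ} (J : Finset (Fin t)) (f : Fin t → (Fin m →₀ ℕ)) (v : Fin m) :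
    (J.sup f) v = J.sup fun i => f i v := by
  classical
  induction J using Finset.induction_on with
  | empty => rfl
  | insert _ _ h ih => simp [Finsupp.sup_apply, ih]

lemma key_exp {m n : ℕ} (a : Fin n → (Fin m →₀ ℕ)) (b : Fin m →₀ ℕ)
    (J : Finset (Fin n)) (j : Fin n) :
    ((J.sup a ⊔ b) - J.sup a) + (J.sup a - (J.erase j).sup a) =
    (J.sup (fun i => a i - a i ⊓ b) - (J.erase j).sup (fun i => a i - a i ⊓ b))
      + (((J.erase j).sup a ⊔ b) - (J.erase j).sup a) := by
  ext v
  have hs : (J.erase j).sup (fun i => (a i) v) ≤ J.sup (fun i => (a i) v) :=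
    Finset.sup_mono (Finset.erase_subset _ _)
  simp only [Finsupp.add_apply, Finsupp.tsub_apply, Finsupp.sup_apply, finsupp_sup_apply,
    Finsupp.inf_apply]
  have h1 : ∀ (K : Finset (Fin n)), K.sup (fun i => (a i) v - min ((a i) v) (b v))
      = K.sup (fun i => (a i) v) - b v := by
    intro K
    rw [show (fun i => (a i) v - min ((a i) v) (b v)) = fun i => (a i) v - b v by
      funext i; omega]
    exact nat_sup_sub _ _ _
  rw [h1, h1]
  omega

/-- φ̃ commutes with the Taylor differentials of T(n_1,…,n_{t−1})
and T(𝔪_1,…,𝔪_{t−1}) (i.e. φ̃ is a chain map), and in degree 0 it is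
multiplication by 𝔪_t (hence φ̃ is a lift of ·𝔪_t : R/(n_1,…,n_{t−1}) →
R/(𝔪_1,…,𝔪_{t−1}) through the augmentations e_∅ ↦ 1). -/
theorem taylorPhi_chain_map {k : Type*} [CommRing k] {m n : ℕ}
    (a : Fin n → (Fin m →₀ ℕ)) (b : Fin m →₀ ℕ) :
    (∀ s : ℕ,
      (taylorD (k := k) a s).comp (taylorPhi (k := k) a b (s + 1)) =
        (taylorPhi (k := k) a b s).comp (taylorD (k := k) (fun i => a i - a i ⊓ b) s)) ∧
    (∀ x : TaylorX k m n 0,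
      (taylorPhi (k := k) a b 0 x) ⟨∅, Finset.card_empty⟩ =
        monomial b (1 : k) * x ⟨∅, Finset.card_empty⟩) := by
    classical
  constructor
  · intro s
    apply Finsupp.lhom_ext'
    intro J
    apply LinearMap.ext_ring
    simp only [LinearMap.comp_apply, Finsupp.lsingle_apply, taylorPhi, taylorD,
      Finsupp.lsum_single, LinearMap.toSpanSingleton_apply, one_smul, lcmExp,
      map_sum, LinearMap.map_smul_of_tower]
    rw [Finset.smul_sum]
    refine Finset.sum_congr rfl fun j _ => ?_
    rw [smul_comm]
    congr 1
    rw [Finsupp.smul_single, Finsupp.smul_single, smul_eq_mul, smul_eq_mul,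
      monomial_mul, monomial_mul, key_exp a b J.1 j.1]
  · intro x
    haveI : Unique {J : Finset (Fin n) // J.card = 0} :=
      ⟨⟨⟨∅, Finset.card_empty⟩⟩, fun J => Subtype.ext (Finset.card_eq_zero.mp J.2)⟩
    rw [Finsupp.unique_single x]
    simp only [taylorPhi, Finsupp.lsum_single, LinearMap.toSpanSingleton_apply, lcmExp]
    have hd : (default : {J : Finset (Fin n) // J.card = 0}) = ⟨∅, Finset.card_empty⟩ :=
      Subsingleton.elim _ _
    rw [hd]
    have h0 : (⊥ : Fin m →₀ ℕ) ⊔ b - ⊥ = b := by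
      rw [bot_sup_eq, Finsupp.bot_eq_zero, tsub_zero]
    simp only [Finset.sup_empty, h0,
      Finsupp.smul_single, smul_eq_mul, Finsupp.single_eq_same, mul_comm]
end

section
/- (Taylor's theorem, dual version, underlying complex.) The augmented cochain complex 0 → C(𝔪_1,…,𝔪_t) → I^0 → I^1 → ⋯ → I^t → 0 of k-modules is exact, where the first map sends a basis monomial x^α of C(𝔪_1,…,𝔪_t) to x^α e^∅ ∈ I^0. In particular the dual Taylor complex T′(𝔪_1,…,𝔪_t) is a resolution of C(𝔪_1,…,𝔪_t). -/
/-!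
STATEMENT 10 (Taylor's theorem, dual version): the augmented cochain complex
0 → C(𝔪_1,…,𝔪_t) → I^0 → I^1 → ⋯ → I^t → 0 of k-modules is exact, where the
first map sends a basis monomial x^α to x^α e^∅.

Monomials in x_1,…,x_m are given by exponent vectors in `Fin m →₀ ℕ`;
`DualX k m t s` is the free k-module I^s with basis
{x^α e^J : α ∈ ℕ^m, J ⊆ {1,…,t}, |J| = s}; note that I^s = 0 for s > t, so
exactness at every I^s with s ≥ 1 (including surjectivity of I^{t−1} → I^t)
is expressed uniformly.  `CMod k m a` is the free k-module C(𝔪_1,…,𝔪_t) with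
basis the monomials x^α divisible by none of the 𝔪_i ("¬ a i ≤ α").
-/

open Finset

/-- The s-th term I^s of the dual Taylor complex: the free k-module with basis
{x^α e^J : α ∈ ℕ^m, J ⊆ {1,…,t}, |J| = s}. -/
abbrev DualX (k : Type*) [CommRing k] (m t s : ℕ) : Type _ :=
  ((Fin m →₀ ℕ) × {J : Finset (Fin t) // J.card = s}) →₀ k

open scoped Classical in
/-- The dual Taylor differential
∂(x^α e^J) = Σ_{j∉J} sign(j,J)·(x^α·𝔪_J/𝔪_{J∪{j}})·e^{J∪{j}},
a summand being zero unless 𝔪_{J∪{j}} divides x^α·𝔪_J. -/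
noncomputable def dualD {k : Type*} [CommRing k] {m t : ℕ}
    (a : Fin t → (Fin m →₀ ℕ)) (s : ℕ) :
    DualX k m t s →ₗ[k] DualX k m t (s + 1) :=
  Finsupp.lsum ℕ fun p =>
    LinearMap.toSpanSingleton k (DualX k m t (s + 1))
      (∑ j ∈ p.2.1ᶜ.attach,
        taylorSign p.2.1 j.1 •
          (if lcmExp a (insert j.1 p.2.1) ≤ p.1 + lcmExp a p.2.1 then
            Finsupp.single
              (p.1 + lcmExp a p.2.1 - lcmExp a (insert j.1 p.2.1),
                ⟨insert j.1 p.2.1, by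
                  rw [Finset.card_insert_of_notMem (Finset.mem_compl.mp j.2), p.2.2]⟩)
              (1 : k)
          else 0))

/-- The free k-module C(𝔪_1,…,𝔪_t), with basis the monomials x^α divisible by
none of the monomials 𝔪_i. -/
abbrev CMod (k : Type*) [CommRing k] (m t : ℕ) (a : Fin t → (Fin m →₀ ℕ)) : Type _ :=
  {α : Fin m →₀ ℕ // ∀ i, ¬ a i ≤ α} →₀ k

/-- The coaugmentation C(𝔪_1,…,𝔪_t) → I^0, x^α ↦ x^α e^∅. -/
noncomputable def cIncl {k : Type*} [CommRing k] {m t : ℕ} (a : Fin t → (Fin m →₀ ℕ)) :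
    CMod k m t a →ₗ[k] DualX k m t 0 :=
  Finsupp.lsum ℕ fun α =>
    LinearMap.toSpanSingleton k (DualX k m t 0)
      (Finsupp.single (α.1, ⟨∅, Finset.card_empty⟩) (1 : k))

----------------------------------------------------------------
-- auxiliary development
----------------------------------------------------------------
open scoped Classical

namespace TaylorAux

variable {k : Type*} [CommRing k] {m t : ℕ} (a : Fin t → (Fin m →₀ ℕ))

lemma lcm_empty : lcmExp a ∅ = 0 := by
  rw [lcmExp, Finset.sup_empty]; rfl

lemma lcm_insert (j : Fin t) (J : Finset (Fin t)) :
    lcmExp a (insert j J) = a j ⊔ lcmExp a J := Finset.sup_insert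

lemma lcm_mono {J J' : Finset (Fin t)} (h : J ⊆ J') : lcmExp a J ≤ lcmExp a J' :=
  Finset.sup_mono h

lemma le_lcm {j : Fin t} {J : Finset (Fin t)} (h : j ∈ J) : a j ≤ lcmExp a J :=
  Finset.le_sup h

lemma lcm_insert_le_iff {j : Fin t} {J : Finset (Fin t)} {β : Fin m →₀ ℕ} :
    lcmExp a (insert j J) ≤ β ↔ a j ≤ β ∧ lcmExp a J ≤ β := by
  rw [lcm_insert]; exact sup_le_iff

lemma taylorSign_empty (j : Fin t) : taylorSign (∅ : Finset (Fin t)) j = 1 := by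
  simp [taylorSign]

lemma taylorSign_mul_self (J : Finset (Fin t)) (j : Fin t) :
    taylorSign J j * taylorSign J j = 1 := by
  rw [taylorSign, ← pow_add]
  exact Even.neg_one_pow ⟨_, rfl⟩

lemma taylorSign_insert {i : Fin t} {J : Finset (Fin t)} (hi : i ∉ J) (j : Fin t) :
    taylorSign (insert i J) j = (if i < j then -1 else 1) * taylorSign J j := by
  unfold taylorSign
  rw [Finset.filter_insert]
  by_cases h : i < j
  · rw [if_pos h, if_pos h,
      Finset.card_insert_of_notMem (fun hc => hi (Finset.mem_of_mem_filter _ hc)),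
      pow_succ]
    ring
  · rw [if_neg h, if_neg h, one_mul]

lemma if_lt_mul {i j : Fin t} (h : i ≠ j) :
    ((if i < j then (-1:ℤ) else 1)) * ((if j < i then (-1:ℤ) else 1)) = -1 := by
  rcases lt_trichotomy i j with h' | h' | h'
  · rw [if_pos h', if_neg (asymm h')]; ring
  · exact absurd h' h
  · rw [if_neg (asymm h'), if_pos h']; ring

lemma single_index_eq {n : ℕ} {β₁ β₂ : Fin m →₀ ℕ} {X₁ X₂ : Finset (Fin t)}
    (h1 : β₁ = β₂) (h2 : X₁ = X₂) (pf₁ : X₁.card = n) (pf₂ : X₂.card = n) :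
    (Finsupp.single (β₁, ⟨X₁, pf₁⟩) (1:k) : DualX k m t n) =
      Finsupp.single (β₂, ⟨X₂, pf₂⟩) 1 := by
  subst h1; subst h2; rfl

end TaylorAux

namespace TaylorAux

variable {k : Type*} [CommRing k] {m t : ℕ} (a : Fin t → (Fin m →₀ ℕ))

/-- The `j`-summand of the differential applied to the basis element `p`. -/
noncomputable def dterm (s : ℕ) (p : (Fin m →₀ ℕ) × {J : Finset (Fin t) // J.card = s})
    (j : Fin t) : DualX k m t (s + 1) :=
  if h : j ∈ p.2.1 then 0 else
    taylorSign p.2.1 j •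
      (if lcmExp a (insert j p.2.1) ≤ p.1 + lcmExp a p.2.1 then
        Finsupp.single
          (p.1 + lcmExp a p.2.1 - lcmExp a (insert j p.2.1),
            ⟨insert j p.2.1, by rw [Finset.card_insert_of_notMem h, p.2.2]⟩)
          (1 : k)
      else 0)

lemma dualD_single (s : ℕ) (p : (Fin m →₀ ℕ) × {J : Finset (Fin t) // J.card = s}) :
    dualD (k := k) a s (Finsupp.single p 1) = ∑ j ∈ p.2.1ᶜ, dterm a s p j := by
  rw [dualD, Finsupp.lsum_single, LinearMap.toSpanSingleton_apply, one_smul,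
    ← Finset.sum_attach p.2.1ᶜ (dterm a s p)]
  refine Finset.sum_congr rfl fun j _ => ?_
  rw [dterm, dif_neg (Finset.mem_compl.mp j.2)]

lemma dterm_of_not_mem (s : ℕ) (α : Fin m →₀ ℕ) {J : Finset (Fin t)} (hJ : J.card = s)
    {j : Fin t} (hj : j ∉ J) :
    dterm (k := k) a s (α, ⟨J, hJ⟩) j =
      taylorSign J j •
        (if lcmExp a (insert j J) ≤ α + lcmExp a J then
          Finsupp.single
            (α + lcmExp a J - lcmExp a (insert j J),
              ⟨insert j J, by rw [Finset.card_insert_of_notMem hj, hJ]⟩)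
            (1 : k)
        else 0) := by
  rw [dterm, dif_neg hj]

lemma dterm_of_mem (s : ℕ) (p : (Fin m →₀ ℕ) × {J : Finset (Fin t) // J.card = s})
    {j : Fin t} (hj : j ∈ p.2.1) : dterm (k := k) a s p j = 0 := by
  rw [dterm, dif_pos hj]

/-- homotopy contraction at the vertex `j₀`. -/
noncomputable def hAux (s : ℕ) (j₀ : Fin t)
    (p : (Fin m →₀ ℕ) × {J : Finset (Fin t) // J.card = s + 1}) : DualX k m t s :=
  if hj : j₀ ∈ p.2.1 then
    taylorSign (p.2.1.erase j₀) j₀ •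
      Finsupp.single
        (p.1 + lcmExp a p.2.1 - lcmExp a (p.2.1.erase j₀),
          ⟨p.2.1.erase j₀, by rw [Finset.card_erase_of_mem hj, p.2.2]; rfl⟩)
        (1 : k)
  else 0

/-- The set of `i` with `a i ≤ β`. -/
noncomputable def sFin (β : Fin m →₀ ℕ) : Finset (Fin t) :=
  Finset.univ.filter fun i => a i ≤ β

lemma mem_sFin {β : Fin m →₀ ℕ} {i : Fin t} : i ∈ sFin a β ↔ a i ≤ β := by
  simp [sFin]

noncomputable def hfun (s : ℕ)
    (p : (Fin m →₀ ℕ) × {J : Finset (Fin t) // J.card = s + 1}) : DualX k m t s :=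
  if hS : (sFin a (p.1 + lcmExp a p.2.1)).Nonempty then
    hAux a s ((sFin a (p.1 + lcmExp a p.2.1)).min' hS) p
  else 0

noncomputable def hmap (s : ℕ) : DualX k m t (s + 1) →ₗ[k] DualX k m t s :=
  Finsupp.lsum ℕ fun p => LinearMap.toSpanSingleton k (DualX k m t s) (hfun a s p)

lemma hmap_single (s : ℕ) (p : (Fin m →₀ ℕ) × {J : Finset (Fin t) // J.card = s + 1}) :
    hmap (k := k) a s (Finsupp.single p 1) = hfun a s p := by
  rw [hmap, Finsupp.lsum_single, LinearMap.toSpanSingleton_apply, one_smul]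

lemma hfun_eq {s : ℕ} (p : (Fin m →₀ ℕ) × {J : Finset (Fin t) // J.card = s + 1})
    {β : Fin m →₀ ℕ} (hβ : p.1 + lcmExp a p.2.1 = β) (hS : (sFin a β).Nonempty) :
    hfun (k := k) a s p = hAux a s ((sFin a β).min' hS) p := by
  rw [hfun, hβ, dif_pos hS]

noncomputable def piFun (p : (Fin m →₀ ℕ) × {J : Finset (Fin t) // J.card = 0}) :
    CMod k m t a :=
  if h : ∀ i, ¬ a i ≤ p.1 then Finsupp.single ⟨p.1, h⟩ 1 else 0

noncomputable def piMap : DualX k m t 0 →ₗ[k] CMod k m t a :=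
  Finsupp.lsum ℕ fun p => LinearMap.toSpanSingleton k (CMod k m t a) (piFun a p)

lemma piMap_single (p : (Fin m →₀ ℕ) × {J : Finset (Fin t) // J.card = 0}) :
    piMap (k := k) a (Finsupp.single p 1) = piFun a p := by
  rw [piMap, Finsupp.lsum_single, LinearMap.toSpanSingleton_apply, one_smul]

lemma cIncl_single (x : {α : Fin m →₀ ℕ // ∀ i, ¬ a i ≤ α}) :
    cIncl (k := k) a (Finsupp.single x 1) =
      Finsupp.single (x.1, ⟨∅, Finset.card_empty⟩) 1 := by
  rw [cIncl, Finsupp.lsum_single, LinearMap.toSpanSingleton_apply, one_smul]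

end TaylorAux

namespace TaylorAux

variable {k : Type*} [CommRing k] {m t : ℕ} (a : Fin t → (Fin m →₀ ℕ))

lemma key5 (x : {α : Fin m →₀ ℕ // ∀ i, ¬ a i ≤ α}) :
    piMap (k := k) a (cIncl a (Finsupp.single x 1)) = Finsupp.single x 1 := by
  rw [cIncl_single, piMap_single, piFun, dif_pos x.2]

lemma key4 (x : {α : Fin m →₀ ℕ // ∀ i, ¬ a i ≤ α}) :
    dualD (k := k) a 0 (cIncl a (Finsupp.single x 1)) = 0 := by
  rw [cIncl_single, dualD_single]
  refine Finset.sum_eq_zero fun j _ => ?_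
  rw [dterm_of_not_mem a 0 x.1 Finset.card_empty (Finset.notMem_empty j)]
  have hc : ¬ (lcmExp a (insert j ∅) ≤ x.1 + lcmExp a ∅) := by
    rw [lcm_insert_le_iff, lcm_empty, add_zero]
    exact fun hh => x.2 j hh.1
  rw [if_neg hc, smul_zero]

lemma key1 (α : Fin m →₀ ℕ) (Js : {J : Finset (Fin t) // J.card = 0}) :
    cIncl (k := k) a (piFun a (α, Js)) + hmap a 0 (dualD a 0 (Finsupp.single (α, Js) 1)) =
      Finsupp.single (α, Js) 1 := by
  obtain ⟨J, hJ⟩ := Js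
  obtain rfl := Finset.card_eq_zero.mp hJ
  have hβ0 : α + lcmExp a (∅ : Finset (Fin t)) = α := by rw [lcm_empty, add_zero]
  rw [dualD_single, map_sum]
  by_cases hdiv : ∀ i, ¬ a i ≤ α
  · have h0 : ∀ j ∈ (∅ : Finset (Fin t))ᶜ,
        hmap (k := k) a 0 (dterm a 0 (α, ⟨∅, hJ⟩) j) = 0 := by
      intro j _
      rw [dterm_of_not_mem a 0 α hJ (Finset.notMem_empty j)]
      have hc : ¬ (lcmExp a (insert j ∅) ≤ α + lcmExp a ∅) := by
        rw [lcm_insert_le_iff, hβ0]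
        exact fun hh => hdiv j hh.1
      rw [if_neg hc, smul_zero, map_zero]
    rw [Finset.sum_eq_zero h0, add_zero, piFun, dif_pos hdiv, cIncl_single]
  · rw [piFun, dif_neg hdiv, map_zero, zero_add]
    push_neg at hdiv
    obtain ⟨i, hi⟩ := hdiv
    have hS : (sFin a α).Nonempty := ⟨i, (mem_sFin a).mpr hi⟩
    set j₀ := (sFin a α).min' hS with hj₀def
    have hj₀ : a j₀ ≤ α := (mem_sFin a).mp ((sFin a α).min'_mem hS)
    rw [Finset.sum_eq_single_of_mem j₀
      (Finset.mem_compl.mpr (Finset.notMem_empty j₀)) ?_]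
    · -- the j₀ term
      rw [dterm_of_not_mem a 0 α hJ (Finset.notMem_empty j₀)]
      have hc : lcmExp a (insert j₀ ∅) ≤ α + lcmExp a ∅ := by
        rw [lcm_insert_le_iff, hβ0]
        exact ⟨hj₀, zero_le⟩
      have hβq : (α + lcmExp a ∅ - lcmExp a (insert j₀ ∅)) + lcmExp a (insert j₀ ∅) = α := by
        rw [tsub_add_cancel_of_le hc, hβ0]
      rw [map_zsmul, if_pos hc, hmap_single, hfun_eq a _ hβq hS, hAux,
        dif_pos (Finset.mem_insert_self j₀ ∅)]
      have hE : (insert j₀ (∅ : Finset (Fin t))).erase j₀ = ∅ :=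
        Finset.erase_insert (Finset.notMem_empty j₀)
      have h1 : (α + lcmExp a ∅ - lcmExp a (insert j₀ ∅)) + lcmExp a (insert j₀ ∅)
          - lcmExp a ((insert j₀ (∅ : Finset (Fin t))).erase j₀) = α := by
        rw [hβq, hE, lcm_empty, tsub_zero]
      rw [smul_smul, single_index_eq (k := k) h1 hE _ Finset.card_empty, hE,
        taylorSign_mul_self, one_smul]
    · intro j _ hne
      rw [dterm_of_not_mem a 0 α hJ (Finset.notMem_empty j), map_zsmul,
        apply_ite (hmap (k := k) a 0), map_zero, hmap_single]
      by_cases hc : lcmExp a (insert j ∅) ≤ α + lcmExp a ∅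
      · have hβq : (α + lcmExp a ∅ - lcmExp a (insert j ∅)) + lcmExp a (insert j ∅) = α := by
          rw [tsub_add_cancel_of_le hc, hβ0]
        have hj₀n : j₀ ∉ insert j (∅ : Finset (Fin t)) := by
          simp [Ne.symm hne]
        rw [if_pos hc, hfun_eq a _ hβq hS, hAux, dif_neg hj₀n, smul_zero]
      · rw [if_neg hc, smul_zero]

end TaylorAux

namespace TaylorAux

variable {k : Type*} [CommRing k] {m t : ℕ} (a : Fin t → (Fin m →₀ ℕ))

lemma dualD_single' (s : ℕ) (α : Fin m →₀ ℕ) (J : Finset (Fin t)) (hJ : J.card = s) :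
    dualD (k := k) a s (Finsupp.single (α, ⟨J, hJ⟩) 1) =
      ∑ j ∈ Jᶜ, dterm a s (α, ⟨J, hJ⟩) j :=
  dualD_single a s _

lemma hAux_of_mem (s : ℕ) (α : Fin m →₀ ℕ) (J : Finset (Fin t)) (hJ : J.card = s + 1)
    {j₀ : Fin t} (hj : j₀ ∈ J) :
    hAux (k := k) a s j₀ (α, ⟨J, hJ⟩) =
      taylorSign (J.erase j₀) j₀ •
        Finsupp.single
          (α + lcmExp a J - lcmExp a (J.erase j₀),
            ⟨J.erase j₀, by rw [Finset.card_erase_of_mem hj, hJ]; rfl⟩)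
          (1 : k) := by
  rw [hAux, dif_pos hj]

lemma hAux_of_not_mem (s : ℕ) (p : (Fin m →₀ ℕ) × {J : Finset (Fin t) // J.card = s + 1})
    {j₀ : Fin t} (hj : j₀ ∉ p.2.1) : hAux (k := k) a s j₀ p = 0 := by
  rw [hAux, dif_neg hj]

set_option maxHeartbeats 2000000 in
lemma key2 (s : ℕ) (α : Fin m →₀ ℕ) (J : Finset (Fin t)) (hJ : J.card = s + 1) :
    dualD (k := k) a s (hfun a s (α, ⟨J, hJ⟩)) +
      hmap a (s + 1) (dualD a (s + 1) (Finsupp.single (α, ⟨J, hJ⟩) 1)) =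
    Finsupp.single (α, ⟨J, hJ⟩) 1 := by
  have hJne : J.Nonempty := Finset.card_pos.mp (by omega)
  have hlcmle : lcmExp a J ≤ α + lcmExp a J := le_add_self
  have hS : (sFin a (α + lcmExp a J)).Nonempty :=
    ⟨hJne.choose, (mem_sFin a).mpr (le_trans (le_lcm a hJne.choose_spec) hlcmle)⟩
  set j₀ := (sFin a (α + lcmExp a J)).min' hS with hj₀def
  have hj₀β : a j₀ ≤ α + lcmExp a J :=
    (mem_sFin a).mp ((sFin a (α + lcmExp a J)).min'_mem hS)
  have pfins : ∀ {j : Fin t}, j ∉ J → (insert j J).card = (s + 1) + 1 := fun hj => by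
    rw [Finset.card_insert_of_notMem hj, hJ]
  have hre := hfun_eq (k := k) a (α, ⟨J, hJ⟩) (β := α + lcmExp a J) rfl hS
  rw [dualD_single' a (s+1) α J hJ, map_sum, hre]
  by_cases hmem : j₀ ∈ J
  · -- case j₀ ∈ J
    have hJ' : (J.erase j₀).card = s := by
      rw [Finset.card_erase_of_mem hmem, hJ]; rfl
    have hins : insert j₀ (J.erase j₀) = J := Finset.insert_erase hmem
    have hq' : (α + lcmExp a J - lcmExp a (J.erase j₀)) + lcmExp a (J.erase j₀) =
        α + lcmExp a J :=
      tsub_add_cancel_of_le (le_trans (lcm_mono a (Finset.erase_subset j₀ J)) hlcmle)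
    rw [hAux_of_mem a s α J hJ hmem, map_zsmul,
      dualD_single' a s _ (J.erase j₀) hJ', Finset.compl_erase,
      Finset.sum_insert (by simp [hmem]), smul_add, add_assoc]
    have p2 : taylorSign (J.erase j₀) j₀ •
          ∑ j ∈ Jᶜ, dterm (k := k) a s
            (α + lcmExp a J - lcmExp a (J.erase j₀), ⟨J.erase j₀, hJ'⟩) j +
        ∑ j ∈ Jᶜ, hmap a (s + 1) (dterm a (s + 1) (α, ⟨J, hJ⟩) j) = 0 := by
      rw [Finset.smul_sum, ← Finset.sum_add_distrib]
      refine Finset.sum_eq_zero fun j hj => ?_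
      have hjJ : j ∉ J := Finset.mem_compl.mp hj
      have hne : j ≠ j₀ := fun h => hjJ (h ▸ hmem)
      have hjJ' : j ∉ J.erase j₀ := fun h => hjJ (Finset.mem_of_mem_erase h)
      have hcondiff : lcmExp a (insert j (J.erase j₀)) ≤ α + lcmExp a J ↔
          lcmExp a (insert j J) ≤ α + lcmExp a J := by
        rw [lcm_insert_le_iff, lcm_insert_le_iff]
        exact ⟨fun h => ⟨h.1, hlcmle⟩,
          fun h => ⟨h.1, le_trans (lcm_mono a (Finset.erase_subset j₀ J)) hlcmle⟩⟩
      rw [dterm_of_not_mem a s _ hJ' hjJ', dterm_of_not_mem a (s+1) α hJ hjJ,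
        map_zsmul, apply_ite (hmap (k := k) a (s+1)), map_zero, hmap_single, hq']
      by_cases hc : lcmExp a (insert j J) ≤ α + lcmExp a J
      · have hc' : lcmExp a (insert j (J.erase j₀)) ≤ α + lcmExp a J := hcondiff.mpr hc
        rw [if_pos hc, if_pos hc', hfun_eq a _ (tsub_add_cancel_of_le hc) hS,
          hAux_of_mem a (s+1) _ (insert j J) (pfins hjJ) (Finset.mem_insert_of_mem hmem)]
        have hEE : (insert j J).erase j₀ = insert j (J.erase j₀) :=
          Finset.erase_insert_of_ne hne
        have hexp : (α + lcmExp a J - lcmExp a (insert j J)) + lcmExp a (insert j J)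
            - lcmExp a ((insert j J).erase j₀) =
            α + lcmExp a J - lcmExp a (insert j (J.erase j₀)) := by
          rw [tsub_add_cancel_of_le hc, hEE]
        have pfA : (insert j (J.erase j₀)).card = s + 1 := by
          rw [Finset.card_insert_of_notMem hjJ', hJ']
        rw [single_index_eq (k := k) hexp hEE _ pfA, hEE, smul_smul, smul_smul, ← add_smul]
        have e1 : taylorSign J j =
            (if j₀ < j then (-1:ℤ) else 1) * taylorSign (J.erase j₀) j := by
          conv_lhs => rw [← hins]
          exact taylorSign_insert (Finset.notMem_erase j₀ J) j
        have e2 : taylorSign (insert j (J.erase j₀)) j₀ =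
            (if j < j₀ then (-1:ℤ) else 1) * taylorSign (J.erase j₀) j₀ :=
          taylorSign_insert hjJ' j₀
        have hco : taylorSign (J.erase j₀) j₀ * taylorSign (J.erase j₀) j +
            taylorSign J j * taylorSign (insert j (J.erase j₀)) j₀ = 0 := by
          rw [e1, e2]
          rcases lt_trichotomy j₀ j with h | h | h
          · rw [if_pos h, if_neg (asymm h)]; ring
          · exact absurd h.symm hne
          · rw [if_neg (asymm h), if_pos h]; ring
        rw [hco, zero_smul]
      · rw [if_neg hc, if_neg (fun h => hc (hcondiff.mp h)), smul_zero, smul_zero,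
          smul_zero, add_zero]
    rw [p2, add_zero]
    -- remaining: the j₀-term gives the identity
    rw [dterm_of_not_mem a s _ hJ' (Finset.notMem_erase j₀ J)]
    have hc1 : lcmExp a (insert j₀ (J.erase j₀)) ≤
        (α + lcmExp a J - lcmExp a (J.erase j₀)) + lcmExp a (J.erase j₀) := by
      rw [hq', hins]; exact hlcmle
    rw [if_pos hc1, smul_smul]
    have h1 : (α + lcmExp a J - lcmExp a (J.erase j₀)) + lcmExp a (J.erase j₀)
        - lcmExp a (insert j₀ (J.erase j₀)) = α := by
      rw [hq', hins]; simp
    rw [single_index_eq (k := k) h1 hins _ hJ, taylorSign_mul_self, one_smul]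
  · -- case j₀ ∉ J
    rw [hAux_of_not_mem a s _ hmem, map_zero, zero_add]
    rw [Finset.sum_eq_single_of_mem j₀ (Finset.mem_compl.mpr hmem) ?_]
    · rw [dterm_of_not_mem a (s+1) α hJ hmem, map_zsmul]
      have hc : lcmExp a (insert j₀ J) ≤ α + lcmExp a J := by
        rw [lcm_insert_le_iff]; exact ⟨hj₀β, hlcmle⟩
      rw [if_pos hc, hmap_single, hfun_eq a _ (tsub_add_cancel_of_le hc) hS,
        hAux_of_mem a (s+1) _ (insert j₀ J) (pfins hmem) (Finset.mem_insert_self j₀ J)]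
      have hE : (insert j₀ J).erase j₀ = J := Finset.erase_insert hmem
      have hexp : (α + lcmExp a J - lcmExp a (insert j₀ J)) + lcmExp a (insert j₀ J)
          - lcmExp a ((insert j₀ J).erase j₀) = α := by
        rw [tsub_add_cancel_of_le hc, hE]; simp
      rw [smul_smul, single_index_eq (k := k) hexp hE _ hJ, hE, taylorSign_mul_self,
        one_smul]
    · intro j hjc hne
      rw [dterm_of_not_mem a (s+1) α hJ (Finset.mem_compl.mp hjc), map_zsmul,
        apply_ite (hmap (k := k) a (s+1)), map_zero, hmap_single]
      by_cases hc : lcmExp a (insert j J) ≤ α + lcmExp a J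
      · have hj₀n : j₀ ∉ insert j J := fun h =>
          (Finset.mem_insert.mp h).elim (fun h' => hne h'.symm) hmem
        rw [if_pos hc, hfun_eq a _ (tsub_add_cancel_of_le hc) hS,
          hAux_of_not_mem a (s+1) _ hj₀n, smul_zero]
      · rw [if_neg hc, smul_zero]

end TaylorAux

namespace TaylorAux

variable {k : Type*} [CommRing k] {m t : ℕ} (a : Fin t → (Fin m →₀ ℕ))

noncomputable def ddF (s : ℕ) (α : Fin m →₀ ℕ) (J : Finset (Fin t)) (hJ : J.card = s)
    (j j' : Fin t) : DualX k m t (s + 1 + 1) :=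
  if h : j ∈ J then 0 else
  if h' : j' ∈ insert j J then 0 else
    (taylorSign J j * taylorSign (insert j J) j') •
      (if lcmExp a (insert j' (insert j J)) ≤ α + lcmExp a J then
        Finsupp.single
          (α + lcmExp a J - lcmExp a (insert j' (insert j J)),
            ⟨insert j' (insert j J), by
              rw [Finset.card_insert_of_notMem h', Finset.card_insert_of_notMem h, hJ]⟩)
          (1 : k)
      else 0)

lemma ddF_self (s : ℕ) (α : Fin m →₀ ℕ) (J : Finset (Fin t)) (hJ : J.card = s)
    (j : Fin t) : ddF (k := k) a s α J hJ j j = 0 := by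
  by_cases h : j ∈ J
  · rw [ddF, dif_pos h]
  · rw [ddF, dif_neg h, dif_pos (Finset.mem_insert_self j J)]

lemma ifsingle_congr {n : ℕ} {X₁ X₂ : Finset (Fin t)} (h : X₁ = X₂) (β : Fin m →₀ ℕ)
    (pf₁ : X₁.card = n) (pf₂ : X₂.card = n) :
    (if lcmExp a X₁ ≤ β then
        Finsupp.single (β - lcmExp a X₁, ⟨X₁, pf₁⟩) (1:k) else (0 : DualX k m t n)) =
    (if lcmExp a X₂ ≤ β then Finsupp.single (β - lcmExp a X₂, ⟨X₂, pf₂⟩) 1 else 0) := by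
  subst h; rfl

lemma ddF_skew (s : ℕ) (α : Fin m →₀ ℕ) (J : Finset (Fin t)) (hJ : J.card = s)
    {j j' : Fin t} (hj : j ∉ J) (hj' : j' ∉ J) (hne : j' ≠ j) :
    ddF (k := k) a s α J hJ j j' + ddF a s α J hJ j' j = 0 := by
  have h1 : j' ∉ insert j J := fun h =>
    (Finset.mem_insert.mp h).elim hne hj'
  have h2 : j ∉ insert j' J := fun h =>
    (Finset.mem_insert.mp h).elim (fun h' => hne h'.symm) hj
  have hcomm : insert j (insert j' J) = insert j' (insert j J) :=
    Finset.insert_comm j j' J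
  have pfA : (insert j' (insert j J)).card = s + 1 + 1 := by
    rw [Finset.card_insert_of_notMem h1, Finset.card_insert_of_notMem hj, hJ]
  have pfB : (insert j (insert j' J)).card = s + 1 + 1 := by
    rw [Finset.card_insert_of_notMem h2, Finset.card_insert_of_notMem hj', hJ]
  rw [ddF, dif_neg hj, dif_neg h1, ddF, dif_neg hj', dif_neg h2,
    ifsingle_congr a hcomm (α + lcmExp a J) pfB pfA, ← add_smul]
  have hco : taylorSign J j * taylorSign (insert j J) j' +
      taylorSign J j' * taylorSign (insert j' J) j = 0 := by
    rw [taylorSign_insert hj j', taylorSign_insert hj' j]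
    rcases lt_trichotomy j j' with h | h | h
    · rw [if_pos h, if_neg (asymm h)]; ring
    · exact absurd h.symm hne
    · rw [if_neg (asymm h), if_pos h]; ring
  rw [hco, zero_smul]

set_option maxHeartbeats 1000000 in
lemma key3 (s : ℕ) (α : Fin m →₀ ℕ) (J : Finset (Fin t)) (hJ : J.card = s) :
    dualD (k := k) a (s + 1) (dualD a s (Finsupp.single (α, ⟨J, hJ⟩) 1)) = 0 := by
  rw [dualD_single' a s α J hJ, map_sum]
  have step1 : ∀ j ∈ Jᶜ, dualD (k := k) a (s+1) (dterm a s (α, ⟨J, hJ⟩) j) =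
      ∑ j' ∈ Jᶜ, ddF a s α J hJ j j' := by
    intro j hj
    have hjJ : j ∉ J := Finset.mem_compl.mp hj
    have pf : (insert j J).card = s + 1 := by
      rw [Finset.card_insert_of_notMem hjJ, hJ]
    rw [dterm_of_not_mem a s α hJ hjJ, map_zsmul, apply_ite (dualD (k := k) a (s+1)),
      map_zero,
      show (∑ j' ∈ Jᶜ, ddF (k := k) a s α J hJ j j') = ∑ j' ∈ Jᶜ.erase j, ddF a s α J hJ j j'
        from (Finset.sum_erase _ (ddF_self a s α J hJ j)).symm]
    by_cases hc : lcmExp a (insert j J) ≤ α + lcmExp a J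
    · rw [if_pos hc, dualD_single' a (s+1) _ (insert j J) pf, Finset.compl_insert,
        Finset.smul_sum]
      refine Finset.sum_congr rfl fun j' hj' => ?_
      have hj'm : j' ∉ insert j J := by
        obtain ⟨hne, hmem⟩ := Finset.mem_erase.mp hj'
        exact fun h => (Finset.mem_insert.mp h).elim hne (Finset.mem_compl.mp hmem)
      rw [dterm_of_not_mem a (s+1) _ pf hj'm, ddF, dif_neg hjJ, dif_neg hj'm,
        smul_smul, tsub_add_cancel_of_le hc]
    · rw [if_neg hc, smul_zero]
      symm
      refine Finset.sum_eq_zero fun j' hj' => ?_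
      have hj'm : j' ∉ insert j J := by
        obtain ⟨hne, hmem⟩ := Finset.mem_erase.mp hj'
        exact fun h => (Finset.mem_insert.mp h).elim hne (Finset.mem_compl.mp hmem)
      rw [ddF, dif_neg hjJ, dif_neg hj'm]
      have hc' : ¬ (lcmExp a (insert j' (insert j J)) ≤ α + lcmExp a J) := fun h =>
        hc (le_trans (lcm_mono a (Finset.subset_insert j' _)) h)
      rw [if_neg hc', smul_zero]
  rw [Finset.sum_congr rfl step1, ← Finset.sum_product']
  refine Finset.sum_involution (fun q _ => (q.2, q.1)) ?_ ?_ ?_ ?_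
  · intro q hq
    obtain ⟨h1, h2⟩ := Finset.mem_product.mp hq
    show ddF (k := k) a s α J hJ q.1 q.2 + ddF a s α J hJ q.2 q.1 = 0
    by_cases hne : q.2 = q.1
    · rw [hne, ddF_self, add_zero]
    · exact ddF_skew a s α J hJ (Finset.mem_compl.mp h1) (Finset.mem_compl.mp h2) hne
  · intro q hq hne hswap
    refine hne ?_
    have h21 : q.2 = q.1 := congrArg Prod.fst hswap
    calc ddF (k := k) a s α J hJ q.1 q.2 = ddF a s α J hJ q.1 q.1 := by rw [h21]
    _ = 0 := ddF_self a s α J hJ q.1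
  · intro q hq
    obtain ⟨h1, h2⟩ := Finset.mem_product.mp hq
    exact Finset.mem_product.mpr ⟨h2, h1⟩
  · intro q hq; rfl

end TaylorAux

namespace TaylorAux

variable {k : Type*} [CommRing k] {m t : ℕ} (a : Fin t → (Fin m →₀ ℕ))

lemma lhom_ext_one {ι : Type*} {N : Type*} [AddCommGroup N] [Module k N]
    {f g : (ι →₀ k) →ₗ[k] N} (h : ∀ p, f (Finsupp.single p 1) = g (Finsupp.single p 1)) :
    f = g := by
  apply Finsupp.lhom_ext
  intro p b
  have hb : (Finsupp.single p b : ι →₀ k) = b • Finsupp.single p 1 := by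
    rw [Finsupp.smul_single, smul_eq_mul, mul_one]
  rw [hb, map_smul, map_smul, h p]

lemma lift1 (x : DualX k m t 0) :
    cIncl a (piMap (k := k) a x) + hmap (k := k) a 0 (dualD a 0 x) = x := by
  have h : (cIncl a ∘ₗ piMap (k := k) a) + (hmap (k := k) a 0 ∘ₗ dualD a 0) = LinearMap.id := by
    apply lhom_ext_one
    intro p
    simp only [LinearMap.add_apply, LinearMap.comp_apply, LinearMap.id_apply]
    obtain ⟨α, Js⟩ := p
    rw [piMap_single]
    exact key1 a α Js
  have := congrFun (congrArg DFunLike.coe h) x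
  simpa using this

lemma lift2 (s : ℕ) (x : DualX k m t (s + 1)) :
    dualD a s (hmap (k := k) a s x) + hmap (k := k) a (s + 1) (dualD a (s + 1) x) = x := by
  have h : (dualD a s ∘ₗ hmap (k := k) a s) + (hmap (k := k) a (s + 1) ∘ₗ dualD a (s + 1)) =
      LinearMap.id := by
    apply lhom_ext_one
    intro p
    simp only [LinearMap.add_apply, LinearMap.comp_apply, LinearMap.id_apply]
    obtain ⟨α, J, hJ⟩ := p
    rw [hmap_single]
    exact key2 a s α J hJ
  have := congrFun (congrArg DFunLike.coe h) x
  simpa using this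

lemma lift3 (s : ℕ) (x : DualX k m t s) :
    dualD (k := k) a (s + 1) (dualD a s x) = 0 := by
  have h : (dualD (k := k) a (s + 1) ∘ₗ dualD a s) = 0 := by
    apply lhom_ext_one
    intro p
    simp only [LinearMap.comp_apply, LinearMap.zero_apply]
    obtain ⟨α, J, hJ⟩ := p
    exact key3 a s α J hJ
  have := congrFun (congrArg DFunLike.coe h) x
  simpa using this

lemma lift4 (c : CMod k m t a) : dualD a 0 (cIncl a c) = 0 := by
  have h : (dualD (k := k) a 0 ∘ₗ cIncl a) = 0 := by
    apply lhom_ext_one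
    intro p
    simp only [LinearMap.comp_apply, LinearMap.zero_apply]
    exact key4 a p
  have := congrFun (congrArg DFunLike.coe h) c
  simpa using this

lemma lift5 (c : CMod k m t a) : piMap a (cIncl a c) = c := by
  have h : (piMap (k := k) a ∘ₗ cIncl a) = LinearMap.id := by
    apply lhom_ext_one
    intro p
    simp only [LinearMap.comp_apply, LinearMap.id_apply]
    exact key5 a p
  have := congrFun (congrArg DFunLike.coe h) c
  simpa using this

end TaylorAux


/-- the augmented complex 0 → C(𝔪) → I^0 → I^1 → ⋯ → I^t → 0
is exact; in particular T′(𝔪_1,…,𝔪_t) is a resolution of C(𝔪_1,…,𝔪_t). -/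
theorem dual_taylor_is_resolution {k : Type*} [CommRing k] {m t : ℕ}
    (a : Fin t → (Fin m →₀ ℕ)) :
    -- exactness at C(𝔪): injectivity of the coaugmentation
    Function.Injective (cIncl (k := k) a) ∧
    -- exactness at I^0: ker ∂ = range of the coaugmentation
    (∀ x : DualX k m t 0,
      dualD (k := k) a 0 x = 0 ↔ ∃ c : CMod k m t a, cIncl (k := k) a c = x) ∧
    -- exactness at I^s for every s ≥ 1 (I^s = 0 for s > t, so this includes
    -- exactness at I^t, i.e. surjectivity of ∂ : I^{t-1} → I^t)
    (∀ s : ℕ, ∀ x : DualX k m t (s + 1),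
      dualD (k := k) a (s + 1) x = 0 ↔ ∃ y : DualX k m t s, dualD (k := k) a s y = x) := by
  refine ⟨?_, ?_, ?_⟩
  · intro x y hxy
    have := congrArg (TaylorAux.piMap a) hxy
    rwa [TaylorAux.lift5, TaylorAux.lift5] at this
  · intro x
    constructor
    · intro hx
      refine ⟨TaylorAux.piMap a x, ?_⟩
      have h1 := TaylorAux.lift1 a x
      rwa [hx, map_zero, add_zero] at h1
    · rintro ⟨c, rfl⟩
      exact TaylorAux.lift4 a c
  · intro s x
    constructor
    · intro hx
      refine ⟨TaylorAux.hmap a s x, ?_⟩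
      have h2 := TaylorAux.lift2 a s x
      rwa [hx, map_zero, add_zero] at h2
    · rintro ⟨y, rfl⟩
      exact TaylorAux.lift3 a s y
end

section
/- Let 𝔪_1,…,𝔪_t be monomials in the variables x_1,…,x_m and n_i = 𝔪_i/gcd(𝔪_i,𝔪_t) for i = 1,…,t−1. The sequence of k-modules 0 → C(𝔪_1,…,𝔪_t) → C(𝔪_1,…,𝔪_{t−1}) → C(n_1,…,n_{t−1}) → 0 is exact, where the first map is the inclusion of basis monomials and the second map sends a basis monomial x^α to x^α/𝔪_t if 𝔪_t divides x^α and to 0 otherwise. In particular, this second map is well defined (its nonzero values lie in C(n_1,…,n_{t−1})), it is surjective, and its kernel is spanned by the monomials divisible by none of 𝔪_1,…,𝔪_t. -/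
/-!
STATEMENT 13: the sequence of k-modules
0 → C(𝔪_1,…,𝔪_t) → C(𝔪_1,…,𝔪_{t−1}) → C(n_1,…,n_{t−1}) → 0
is exact, where the first map is the inclusion of basis monomials and the
second sends a basis monomial x^α to x^α/𝔪_t if 𝔪_t | x^α and to 0 otherwise.

Monomials x^α are given by exponent vectors α ∈ `Fin m →₀ ℕ`; divisibility is
the pointwise order ≤ and division is truncated subtraction.  All the modules
C(𝔤_1,…,𝔤_s) are realised as submodules `cSubmodule` of the free k-module
`(Fin m →₀ ℕ) →₀ k` on all monomials: `cSubmodule k g` is spanned by the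
monomials divisible by none of the 𝔤_i, i.e. it consists of those elements
whose support contains only such monomials.  𝔪_1,…,𝔪_{t−1} have exponent
vectors `a i` (indexed by `i : Fin n`, n = t−1), 𝔪_t has exponent vector `b`,
and n_i = 𝔪_i/gcd(𝔪_i,𝔪_t) has exponent vector `a i - a i ⊓ b`.  The division
map x^α ↦ x^α/𝔪_t (or 0) is `divMap k b`.  The theorem asserts:
* C(𝔪_1,…,𝔪_t) ⊆ C(𝔪_1,…,𝔪_{t−1})  (the inclusion is well defined; it is
  injective as an actual inclusion of submodules);
* the division map sends C(𝔪_1,…,𝔪_{t−1}) into C(n_1,…,n_{t−1})  (the second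
  map is well defined);
* it maps C(𝔪_1,…,𝔪_{t−1}) onto C(n_1,…,n_{t−1})  (surjectivity);
* its kernel within C(𝔪_1,…,𝔪_{t−1}) is exactly C(𝔪_1,…,𝔪_t), the span of the
  monomials divisible by none of 𝔪_1,…,𝔪_t  (exactness in the middle).
-/

open Finset

/-- The submodule C(𝔤₁,…,𝔤_s) of the free k-module on all monomials, spanned
by the monomials divisible by none of the monomials 𝔤_i (given by their
exponent vectors `g i`). -/
def cSubmodule (k : Type*) [CommRing k] {m : ℕ} {ι : Type*} (g : ι → (Fin m →₀ ℕ)) :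
    Submodule k ((Fin m →₀ ℕ) →₀ k) where
  carrier := {f | ∀ α ∈ f.support, ∀ i, ¬ g i ≤ α}
  add_mem' := by
    intro f₁ f₂ h₁ h₂ α hα i
    rcases Finset.mem_union.mp (Finsupp.support_add hα) with h | h
    · exact h₁ α h i
    · exact h₂ α h i
  zero_mem' := by simp
  smul_mem' := by
    intro c f hf α hα
    exact hf α (Finsupp.support_smul hα)

open scoped Classical in
/-- The division map x^α ↦ x^α/𝔪_t if 𝔪_t | x^α, and x^α ↦ 0 otherwise,
where 𝔪_t is the monomial with exponent vector b. -/
noncomputable def divMap (k : Type*) [CommRing k] {m : ℕ} (b : Fin m →₀ ℕ) :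
    ((Fin m →₀ ℕ) →₀ k) →ₗ[k] ((Fin m →₀ ℕ) →₀ k) :=
  Finsupp.lsum ℕ fun α =>
    LinearMap.toSpanSingleton k ((Fin m →₀ ℕ) →₀ k)
      (if b ≤ α then Finsupp.single (α - b) (1 : k) else 0)


open scoped Classical in
lemma divMap_apply' {k : Type*} [CommRing k] {m : ℕ} (b : Fin m →₀ ℕ)
    (f : (Fin m →₀ ℕ) →₀ k) (β : Fin m →₀ ℕ) :
    (divMap k b f) β = f (β + b) := by
  rw [divMap]
  induction f using Finsupp.induction_linear with
  | zero => simp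
  | add f g hf hg => rw [map_add, Finsupp.add_apply, hf, hg, Finsupp.add_apply]
  | single α c =>
    rw [Finsupp.lsum_single, LinearMap.toSpanSingleton_apply]
    by_cases h : b ≤ α
    · rw [if_pos h, Finsupp.smul_single, smul_eq_mul, mul_one, Finsupp.single_apply,
        Finsupp.single_apply]
      congr 1
      simp only [eq_iff_iff]
      constructor
      · rintro rfl; exact (tsub_add_cancel_of_le h).symm
      · rintro rfl; simp
    · rw [if_neg h, smul_zero, Finsupp.zero_apply, Finsupp.single_apply, if_neg]
      rintro rfl
      exact h le_add_self

/-- exactness of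
0 → C(𝔪_1,…,𝔪_t) → C(𝔪_1,…,𝔪_{t−1}) → C(n_1,…,n_{t−1}) → 0. -/
theorem cmod_ses {k : Type*} [CommRing k] {m n : ℕ}
    (a : Fin n → (Fin m →₀ ℕ)) (b : Fin m →₀ ℕ) :
    -- the inclusion C(𝔪_1,…,𝔪_t) ⊆ C(𝔪_1,…,𝔪_{t−1})
    cSubmodule k (Fin.snoc a b) ≤ cSubmodule k a ∧
    -- the division map is well defined: it sends C(𝔪_1,…,𝔪_{t−1}) into C(n)
    (∀ f ∈ cSubmodule k a, divMap k b f ∈ cSubmodule k (fun i => a i - a i ⊓ b)) ∧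
    -- surjectivity onto C(n)
    (∀ g ∈ cSubmodule k (fun i => a i - a i ⊓ b),
      ∃ f ∈ cSubmodule k a, divMap k b f = g) ∧
    -- the kernel of the division map on C(𝔪_1,…,𝔪_{t−1}) is exactly
    -- C(𝔪_1,…,𝔪_t), spanned by the monomials divisible by none of 𝔪_1,…,𝔪_t
    (∀ f ∈ cSubmodule k a, (divMap k b f = 0 ↔ f ∈ cSubmodule k (Fin.snoc a b))) := by
  have hinj : Function.Injective (fun β : Fin m →₀ ℕ => β + b) :=
    fun x y h => by
      ext i
      have := congrArg (fun f : Fin m →₀ ℕ => f i) h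
      simp only [Finsupp.add_apply] at this
      omega
  refine ⟨?_, ?_, ?_, ?_⟩
  · intro f hf α hα i
    have := hf α hα i.castSucc
    rwa [Fin.snoc_castSucc] at this
  · intro f hf β hβ i hle
    rw [Finsupp.mem_support_iff, divMap_apply'] at hβ
    refine hf (β + b) (Finsupp.mem_support_iff.mpr hβ) i ?_
    rw [Finsupp.le_def] at hle ⊢
    intro x
    have := hle x
    rw [Finsupp.tsub_apply, Finsupp.inf_apply] at this
    rw [Finsupp.add_apply]
    omega
  · intro g hg
    refine ⟨Finsupp.mapDomain (· + b) g, ?_, ?_⟩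
    · intro α hα i hle
      obtain ⟨β, hβ, rfl⟩ := Finset.mem_image.mp (Finsupp.mapDomain_support hα)
      refine hg β hβ i ?_
      rw [Finsupp.le_def] at hle ⊢
      intro x
      have := hle x
      rw [Finsupp.add_apply] at this
      rw [Finsupp.tsub_apply, Finsupp.inf_apply]
      omega
    · ext β
      rw [divMap_apply', Finsupp.mapDomain_apply hinj]
  · intro f hf
    constructor
    · intro h0 α hα i
      refine Fin.lastCases ?_ (fun j => ?_) i
      · rw [Fin.snoc_last]
        intro hle
        have h1 : f ((α - b) + b) = 0 := by
          rw [← divMap_apply', h0, Finsupp.zero_apply]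
        rw [tsub_add_cancel_of_le hle] at h1
        exact Finsupp.mem_support_iff.mp hα h1
      · rw [Fin.snoc_castSucc]
        exact hf α hα j
    · intro hmem
      ext β
      rw [divMap_apply', Finsupp.zero_apply]
      by_contra hne
      exact hmem (β + b) (Finsupp.mem_support_iff.mpr hne) (Fin.last n)
        (by rw [Fin.snoc_last]; exact le_add_self)
end

section
/- Let K be an abstract simplicial complex on [m] = {1,…,m}, let K_1,…,K_m be abstract simplicial complexes on pairwise disjoint finite vertex sets V_1,…,V_m, and let K(K_1,…,K_m) be the substitution complex. A subset I ⊆ V_1 ∪ … ∪ V_m is a missing face of K(K_1,…,K_m) if and only if either (i) I is a missing face of some K_i, or (ii) there exist a missing face {i_1,…,i_k} of K (with i_1,…,i_k distinct) and vertices j_l ∈ V_{i_l} for l = 1,…,k such that I = {j_1,…,j_k}. -/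
/-!
STATEMENT 15: a subset I of V₁ ∪ … ∪ V_m is a missing face of the substitution
complex K(K₁,…,K_m) iff either (i) I is a missing face of some K_i, or
(ii) I = {j₁,…,j_k} for a missing face {i₁,…,i_k} of K and vertices
j_l ∈ V_{i_l}.
-/

open Finset

/-- An abstract simplicial complex on the finite vertex set `V ⊆ W`:
a collection of subsets of V containing the empty set and all singletons and
closed under passing to subsets. -/
structure SimplicialOn (W : Type*) [DecidableEq W] (V : Finset W) where
  faces : Set (Finset W)
  subset_of_mem : ∀ F ∈ faces, F ⊆ V
  empty_mem : ∅ ∈ faces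
  singleton_mem : ∀ v ∈ V, {v} ∈ faces
  down_closed : ∀ F ∈ faces, ∀ G ⊆ F, G ∈ faces

/-- The substitution complex K(K₁,…,K_m): the collection of all subsets of
V₁ ∪ … ∪ V_m of the form I_{j₁} ∪ … ∪ I_{j_k} with {j₁,…,j_k} ∈ K and
I_{j_l} ∈ K_{j_l}. -/
def substitution {W : Type*} [DecidableEq W] {m : ℕ} {V : Fin m → Finset W}
    (K : SimplicialOn (Fin m) Finset.univ)
    (Ks : ∀ i, SimplicialOn W (V i)) : Set (Finset W) :=
  { F | ∃ s ∈ K.faces, ∃ I : Fin m → Finset W,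
      (∀ j ∈ s, I j ∈ (Ks j).faces) ∧ F = s.biUnion I }

/-- `I` is a missing face of the collection of faces `S` of a simplicial
complex with vertex set `V`: I ⊆ V, I ∉ S, and every proper subset of I
belongs to S. -/
def IsMissingFace {W : Type*} [DecidableEq W] (S : Set (Finset W)) (V : Finset W)
    (I : Finset W) : Prop :=
  I ⊆ V ∧ I ∉ S ∧ ∀ G ⊂ I, G ∈ S

section Aux

variable {W : Type*} [DecidableEq W] {m : ℕ} {V : Fin m → Finset W}

/-- The support of a set `F`: indices `i` with `F ∩ V i` nonempty. -/
def suppV (V : Fin m → Finset W) (F : Finset W) : Finset (Fin m) :=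
  Finset.univ.filter fun i => (F ∩ V i).Nonempty

lemma mem_suppV {F : Finset W} {i : Fin m} : i ∈ suppV V F ↔ (F ∩ V i).Nonempty := by
  simp [suppV]

omit [DecidableEq W] in
lemma eq_of_mem_V (hdisj : ∀ i j, i ≠ j → Disjoint (V i) (V j)) {x : W} {i j : Fin m}
    (hi : x ∈ V i) (hj : x ∈ V j) : i = j := by
  by_contra h
  exact Finset.disjoint_left.mp (hdisj i j h) hi hj

lemma mem_sub_iff (hdisj : ∀ i j, i ≠ j → Disjoint (V i) (V j))
    (K : SimplicialOn (Fin m) Finset.univ) (Ks : ∀ i, SimplicialOn W (V i))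
    {F : Finset W} (hF : F ⊆ Finset.univ.biUnion V) :
    F ∈ substitution K Ks ↔ suppV V F ∈ K.faces ∧ ∀ i, F ∩ V i ∈ (Ks i).faces := by
  constructor
  · rintro ⟨s, hs, J, hJ, rfl⟩
    have hsub : ∀ i, (s.biUnion J) ∩ V i ⊆ if i ∈ s then J i else ∅ := by
      intro i x hx
      simp only [mem_inter, mem_biUnion] at hx
      obtain ⟨⟨j, hj, hxj⟩, hxi⟩ := hx
      have hxVj : x ∈ V j := (Ks j).subset_of_mem _ (hJ j hj) hxj
      have hij : i = j := eq_of_mem_V hdisj hxi hxVj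
      subst hij
      simp [hj, hxj]
    constructor
    · apply K.down_closed s hs
      intro i hi
      rw [mem_suppV] at hi
      obtain ⟨x, hx⟩ := hi
      have h2 := hsub i hx
      by_contra h
      simp [h] at h2
    · intro i
      by_cases h : i ∈ s
      · exact (Ks i).down_closed _ (hJ i h) _ (by simpa [h] using hsub i)
      · have h0 : (s.biUnion J) ∩ V i = ∅ := subset_empty.mp (by simpa [h] using hsub i)
        rw [h0]; exact (Ks i).empty_mem
  · rintro ⟨hsupp, hint⟩
    refine ⟨suppV V F, hsupp, fun i => F ∩ V i, fun j _ => hint j, ?_⟩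
    ext x
    simp only [mem_biUnion, mem_suppV, mem_inter]
    constructor
    · intro hx
      obtain ⟨i, -, hxi⟩ := mem_biUnion.mp (hF hx)
      exact ⟨i, ⟨x, mem_inter.mpr ⟨hx, hxi⟩⟩, hx, hxi⟩
    · rintro ⟨i, -, hx, -⟩; exact hx

end Aux

/-- description of the missing faces of a substitution complex:
I is a missing face of K(K₁,…,K_m) iff either I is a missing face of some K_i,
or I is obtained from a missing face s = {i₁,…,i_k} of K by choosing one vertex
j_l ∈ V_{i_l} for each l (i.e. I = s.image g with g i ∈ V i for all i ∈ s). -/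
theorem substitution_missing_faces {W : Type*} [DecidableEq W] {m : ℕ}
    (V : Fin m → Finset W)
    (hdisj : ∀ i j, i ≠ j → Disjoint (V i) (V j))
    (K : SimplicialOn (Fin m) Finset.univ)
    (Ks : ∀ i, SimplicialOn W (V i)) (I : Finset W) :
    IsMissingFace (substitution K Ks) (Finset.univ.biUnion V) I ↔
      ((∃ i, IsMissingFace (Ks i).faces (V i) I) ∨
        (∃ s : Finset (Fin m), IsMissingFace K.faces Finset.univ s ∧
          ∃ g : Fin m → W, (∀ i ∈ s, g i ∈ V i) ∧ I = s.image g)) := by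
  constructor
  · rintro ⟨hIV, hInot, hImin⟩
    have hne : I ≠ ∅ := by
      rintro rfl
      exact hInot ⟨∅, K.empty_mem, fun _ => ∅, by simp, by simp⟩
    by_cases hA : ∃ i, I ∩ V i ∉ (Ks i).faces
    · obtain ⟨i, hi⟩ := hA
      have hIVi : I ⊆ V i := by
        by_contra h
        have hss : I ∩ V i ⊂ I :=
          ⟨inter_subset_left, fun hle => h fun x hx => (mem_inter.mp (hle hx)).2⟩
        have hmem := hImin _ hss
        rw [mem_sub_iff hdisj K Ks (inter_subset_left.trans hIV)] at hmem
        have h2 := hmem.2 i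
        rw [inter_assoc, inter_self] at h2
        exact hi h2
      have hII : I ∩ V i = I := inter_eq_left.mpr hIVi
      left
      refine ⟨i, hIVi, by rwa [hII] at hi, fun G hG => ?_⟩
      have hmem := hImin G hG
      rw [mem_sub_iff hdisj K Ks ((hG.subset.trans hIV))] at hmem
      have h2 := hmem.2 i
      rwa [inter_eq_left.mpr (hG.subset.trans hIVi)] at h2
    · push_neg at hA
      have hsuppK : suppV V I ∉ K.faces := fun h =>
        hInot ((mem_sub_iff hdisj K Ks hIV).mpr ⟨h, hA⟩)
      -- each I ∩ V i is a singleton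
      have hsing : ∀ i, ∀ x ∈ I ∩ V i, I ∩ V i = {x} := by
        intro i x hx
        apply Finset.Subset.antisymm _ (singleton_subset_iff.mpr hx)
        intro y hy
        rw [mem_singleton]
        by_contra hyx
        have hyI : y ∈ I := (mem_inter.mp hy).1
        have hG : I.erase y ⊂ I := erase_ssubset hyI
        have hmem := hImin _ hG
        rw [mem_sub_iff hdisj K Ks (hG.subset.trans hIV)] at hmem
        apply hsuppK
        have heq : suppV V (I.erase y) = suppV V I := by
          apply Finset.Subset.antisymm
          · intro j hj
            rw [mem_suppV] at hj ⊢
            obtain ⟨z, hz⟩ := hj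
            exact ⟨z, mem_inter.mpr ⟨mem_of_mem_erase (mem_inter.mp hz).1,
              (mem_inter.mp hz).2⟩⟩
          · intro j hj
            rw [mem_suppV] at hj ⊢
            obtain ⟨z, hz⟩ := hj
            rw [mem_inter] at hz
            by_cases hzy : z = y
            · subst hzy
              have hji : j = i := eq_of_mem_V hdisj hz.2 (mem_inter.mp hy).2
              subst hji
              exact ⟨x, mem_inter.mpr ⟨mem_erase.mpr ⟨fun h => hyx h.symm,
                (mem_inter.mp hx).1⟩, (mem_inter.mp hx).2⟩⟩
            · exact ⟨z, mem_inter.mpr ⟨mem_erase.mpr ⟨hzy, hz.1⟩, hz.2⟩⟩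
        rw [← heq]
        exact hmem.1
      obtain ⟨w0, hw0⟩ := Finset.nonempty_iff_ne_empty.mpr hne
      set g : Fin m → W := fun i =>
        if h : (I ∩ V i).Nonempty then h.choose else w0 with hgdef
      have hg : ∀ i ∈ suppV V I, g i ∈ I ∩ V i := by
        intro i hi
        rw [mem_suppV] at hi
        simp only [hgdef, dif_pos hi]
        exact hi.choose_spec
      right
      refine ⟨suppV V I, ⟨subset_univ _, hsuppK, fun t ht => ?_⟩, g,
        fun i hi => (mem_inter.mp (hg i hi)).2, ?_⟩
      · -- proper subsets of the support are faces of K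
        set G := t.biUnion (fun i => I ∩ V i) with hGdef
        have hGI : G ⊆ I := by
          intro x hx
          obtain ⟨j, -, hxj⟩ := mem_biUnion.mp hx
          exact (mem_inter.mp hxj).1
        obtain ⟨i, hisupp, hit⟩ := Finset.exists_of_ssubset ht
        have hgiG : g i ∉ G := by
          intro h
          obtain ⟨j, hj, hxj⟩ := mem_biUnion.mp h
          have : i = j := eq_of_mem_V hdisj (mem_inter.mp (hg i hisupp)).2
            (mem_inter.mp hxj).2
          exact hit (this ▸ hj)
        have hGss : G ⊂ I := (Finset.ssubset_iff_of_subset hGI).mpr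
          ⟨g i, (mem_inter.mp (hg i hisupp)).1, hgiG⟩
        have hmem := hImin G hGss
        rw [mem_sub_iff hdisj K Ks (hGI.trans hIV)] at hmem
        have heq : suppV V G = t := by
          apply Finset.Subset.antisymm
          · intro j hj
            rw [mem_suppV] at hj
            obtain ⟨z, hz⟩ := hj
            rw [mem_inter] at hz
            obtain ⟨j', hj', hzj'⟩ := mem_biUnion.mp hz.1
            have : j = j' := eq_of_mem_V hdisj hz.2 (mem_inter.mp hzj').2
            exact this ▸ hj'
          · intro j hj
            rw [mem_suppV]
            have hjsupp : j ∈ suppV V I := ht.subset hj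
            rw [mem_suppV] at hjsupp
            obtain ⟨z, hz⟩ := hjsupp
            exact ⟨z, mem_inter.mpr ⟨mem_biUnion.mpr ⟨j, hj, hz⟩,
              (mem_inter.mp hz).2⟩⟩
        rw [← heq]
        exact hmem.1
      · -- I = (suppV V I).image g
        ext x
        simp only [mem_image]
        constructor
        · intro hx
          obtain ⟨i, -, hxi⟩ := mem_biUnion.mp (hIV hx)
          have hisupp : i ∈ suppV V I := mem_suppV.mpr ⟨x, mem_inter.mpr ⟨hx, hxi⟩⟩
          have := hsing i (g i) (hg i hisupp)
          have hxg : x ∈ ({g i} : Finset W) := this ▸ mem_inter.mpr ⟨hx, hxi⟩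
          exact ⟨i, hisupp, (mem_singleton.mp hxg).symm⟩
        · rintro ⟨i, hi, rfl⟩
          exact (mem_inter.mp (hg i hi)).1
  · rintro (⟨i, hIVi, hInot, hImin⟩ | ⟨s, ⟨-, hsK, hsmin⟩, g, hg, rfl⟩)
    · refine ⟨hIVi.trans (subset_biUnion_of_mem V (mem_univ i)), ?_, ?_⟩
      · intro h
        rw [mem_sub_iff hdisj K Ks
          (hIVi.trans (subset_biUnion_of_mem V (mem_univ i)))] at h
        have h2 := h.2 i
        rw [inter_eq_left.mpr hIVi] at h2
        exact hInot h2
      · intro G hG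
        exact ⟨{i}, K.singleton_mem i (mem_univ i), fun _ => G,
          fun j hj => by rw [mem_singleton.mp hj]; exact hImin G hG,
          by simp⟩
    · have hFV : s.image g ⊆ Finset.univ.biUnion V := by
        intro x hx
        obtain ⟨i, hi, rfl⟩ := mem_image.mp hx
        exact mem_biUnion.mpr ⟨i, mem_univ i, hg i hi⟩
      have hsupp : suppV V (s.image g) = s := by
        ext i
        rw [mem_suppV]
        constructor
        · rintro ⟨x, hx⟩
          rw [mem_inter] at hx
          obtain ⟨j, hj, rfl⟩ := mem_image.mp hx.1
          exact (eq_of_mem_V hdisj hx.2 (hg j hj)) ▸ hj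
        · intro hi
          exact ⟨g i, mem_inter.mpr ⟨mem_image_of_mem g hi, hg i hi⟩⟩
      refine ⟨hFV, ?_, ?_⟩
      · intro h
        rw [mem_sub_iff hdisj K Ks hFV] at h
        rw [hsupp] at h
        exact hsK h.1
      · intro G hG
        set t := s.filter (fun i => g i ∈ G) with htdef
        have himg : t.image g = G := by
          apply Finset.Subset.antisymm
          · intro x hx
            obtain ⟨j, hj, rfl⟩ := mem_image.mp hx
            exact (mem_filter.mp hj).2
          · intro x hx
            obtain ⟨j, hj, rfl⟩ := mem_image.mp (hG.subset hx)
            exact mem_image_of_mem g (mem_filter.mpr ⟨hj, hx⟩)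
        have hts : t ⊂ s := by
          refine (Finset.ssubset_iff_subset_ne).mpr ⟨filter_subset _ _, ?_⟩
          intro h
          rw [h] at himg
          exact hG.ne himg.symm
        exact ⟨t, hsmin t hts, fun i => {g i},
          fun j hj => (Ks j).singleton_mem _ (hg j (hts.subset hj)),
          by rw [← himg]; ext x; simp [eq_comm]⟩
end
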